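/- arXiv:1509.07760 — 7 statements merged into one kernel-verified Lean document; each statement's English description precedes it below -/
import Mathlib

section
/- Let b = (b_i)_{i∈ℤ} be a biinfinite sequence with every b_i ∈ {0,1}, and let x = (x_j)_{j∈ℤ} ∈ ℓ²(ℤ) with ‖x‖ = 1. Then the complex number z = ⟨A_b x, x⟩ satisfies |z − ⟨A_𝟎 x, x⟩| + |z − 2·Re(⟨A_𝟎 x, x⟩)| < 1; that is, z lies strictly inside the ellipse with focal points ⟨A_𝟎 x, x⟩ and 2·Re(⟨A_𝟎 x, x⟩) and major axis of length 1. -/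
open scoped ComplexConjugate ENNReal
open Filter

noncomputable section

/-- `ℓ²(ℤ)`, the Hilbert space of square-summable biinfinite complex sequences. -/
abbrev Hseq : Type := lp (fun _ : ℤ => ℂ) 2

/-- `A` is the (bounded) tridiagonal operator `A_b` associated to the biinfinite
sequence `b`, i.e. `(A x) j = x (j+1) + b (j-1) * x (j-1)`. -/
def IsTridiag (b : ℤ → ℂ) (A : Hseq →L[ℂ] Hseq) : Prop :=
  ∀ x : Hseq, ∀ j : ℤ,
    (A x : ℤ → ℂ) j = (x : ℤ → ℂ) (j + 1) + b (j - 1) * (x : ℤ → ℂ) (j - 1)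

/-- The numerical range `W(A) = {⟨Ax, x⟩ : ‖x‖ = 1}`, where
`⟨u, v⟩ = ∑ₖ uₖ · conj(vₖ)`; in Mathlib's convention this is `⟪x, A x⟫_ℂ`. -/
def numRange (A : Hseq →L[ℂ] Hseq) : Set ℂ :=
  {z | ∃ x : Hseq, ‖x‖ = 1 ∧ (inner (𝕜 := ℂ) x (A x) : ℂ) = z}

/-- The shift orbit `Orb(b) = {φⁿ(b) : n ∈ ℤ}` where `(φⁿ(b))ᵢ = b_{i+n}`. -/
def shiftOrbit (b : ℤ → ℂ) : Set (ℤ → ℂ) :=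
  {c | ∃ n : ℤ, c = fun i => b (i + n)}

/-- For `{0,1}`-valued `b` and a unit vector `x`, the value `⟨A_b x, x⟩` lies strictly
inside the ellipse with foci `⟨A_𝟎 x, x⟩` and `2·Re⟨A_𝟎 x, x⟩` and major axis `1`. -/
theorem stmt3 (b : ℤ → ℂ) (hb : ∀ i, b i = 0 ∨ b i = 1)
    (Ab : Hseq →L[ℂ] Hseq) (hAb : IsTridiag b Ab)
    (A0 : Hseq →L[ℂ] Hseq) (hA0 : IsTridiag (fun _ => (0 : ℂ)) A0)
    (x : Hseq) (hx : ‖x‖ = 1) :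
    ‖(inner (𝕜 := ℂ) x (Ab x) : ℂ) - (inner (𝕜 := ℂ) x (A0 x) : ℂ)‖ +
      ‖(inner (𝕜 := ℂ) x (Ab x) : ℂ) -
        (2 * (inner (𝕜 := ℂ) x (A0 x) : ℂ).re : ℂ)‖ < 1 := by
  set y : ℤ → ℂ := (x : ℤ → ℂ) with hy
  have hbnorm : ∀ i, ‖b i‖ ≤ 1 := by
    intro i; rcases hb i with h | h <;> simp [h]
  have hrpow : ∀ a : ℝ, 0 ≤ a → a ^ ((2 : ℝ≥0∞).toReal) = a ^ 2 := by
    intro a ha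
    rw [ENNReal.toReal_ofNat, show (2 : ℝ) = ((2 : ℕ) : ℝ) by norm_num, Real.rpow_natCast]
  -- square-summability
  have hsq : Summable (fun j : ℤ => ‖y j‖ ^ 2) := by
    have h := Memℓp.summable (p := (2 : ℝ≥0∞)) (by norm_num) (lp.memℓp x)
    exact h.congr fun j => hrpow _ (norm_nonneg _)
  have htsum : (∑' j : ℤ, ‖y j‖ ^ 2) = 1 := by
    have h := lp.norm_rpow_eq_tsum (p := 2) (by norm_num) x
    rw [hx] at h
    calc (∑' j : ℤ, ‖y j‖ ^ 2) = ∑' j : ℤ, ‖y j‖ ^ ((2 : ℝ≥0∞).toReal) :=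
          tsum_congr fun j => (hrpow _ (norm_nonneg _)).symm
      _ = 1 := by rw [← h]; norm_num
  have hsqs : Summable (fun j : ℤ => ‖y (j + 1)‖ ^ 2) :=
    ((Equiv.addRight (1 : ℤ)).summable_iff (f := fun j : ℤ => ‖y j‖ ^ 2)).2 hsq
  have htsums : (∑' j : ℤ, ‖y (j + 1)‖ ^ 2) = 1 :=
    ((Equiv.addRight (1 : ℤ)).tsum_eq (fun j : ℤ => ‖y j‖ ^ 2)).trans htsum
  -- the cross terms
  set c : ℤ → ℂ := fun j => conj (y (j + 1)) * y j with hc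
  have hcnorm : ∀ j, ‖c j‖ = ‖y (j + 1)‖ * ‖y j‖ := by
    intro j; simp [hc, norm_mul]
  set g : ℤ → ℝ := fun j => (‖y j‖ ^ 2 + ‖y (j + 1)‖ ^ 2) / 2 with hg
  have hgsum : Summable g := (hsq.add hsqs).div_const 2
  have hgtsum : (∑' j, g j) = 1 := by
    rw [hg, tsum_div_const, Summable.tsum_add hsq hsqs, htsum, htsums]; norm_num
  have hcle : ∀ j, ‖c j‖ ≤ g j := by
    intro j; rw [hcnorm, hg]
    nlinarith [sq_nonneg (‖y (j + 1)‖ - ‖y j‖)]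
  have hcsum : Summable (fun j => ‖c j‖) :=
    Summable.of_nonneg_of_le (fun j => norm_nonneg _) hcle hgsum
  -- a strict index
  have hstrict : ∃ j, ‖c j‖ < g j := by
    by_contra h
    push_neg at h
    have heq : ∀ j, ‖y (j + 1)‖ = ‖y j‖ := by
      intro j
      have h3 : ‖c j‖ = g j := le_antisymm (hcle j) (h j)
      rw [hcnorm, hg] at h3
      nlinarith [sq_nonneg (‖y (j + 1)‖ - ‖y j‖), norm_nonneg (y j), norm_nonneg (y (j + 1))]
    have hconst : ∀ j : ℤ, ‖y j‖ = ‖y 0‖ := by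
      intro j
      induction j using Int.induction_on with
      | zero => rfl
      | succ k ih => rw [heq (k : ℤ)]; exact ih
      | pred k ih =>
        have h4 := heq (-(k : ℤ) - 1)
        rw [show (-(k : ℤ) - 1 + 1) = -(k : ℤ) by ring] at h4
        rw [← h4]; exact ih
    have hzero : ‖y 0‖ ^ 2 = 0 := by
      rw [← summable_const_iff (β := ℤ)]
      exact hsq.congr fun j => by rw [hconst j]
    have hzt : (∑' j : ℤ, ‖y j‖ ^ 2) = 0 :=
      (tsum_congr fun j => by rw [hconst j, hzero]).trans tsum_zero
    rw [htsum] at hzt; norm_num at hzt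
  obtain ⟨j0, hj0⟩ := hstrict
  have hkey : (∑' j, ‖c j‖) < 1 := by
    rw [← hgtsum]
    exact Summable.tsum_lt_tsum hcle hj0 hcsum hgsum
  -- inner products
  set S : ℂ := (inner (𝕜 := ℂ) x (A0 x) : ℂ) with hS
  set Z : ℂ := (inner (𝕜 := ℂ) x (Ab x) : ℂ) with hZ
  have hinner0 : S = ∑' j, conj (y j) * y (j + 1) := by
    rw [hS, lp.inner_eq_tsum]
    refine tsum_congr fun j => ?_
    rw [hA0 x j]
    simp [RCLike.inner_apply, hy]
    ring
  have hsum1 : Summable (fun j : ℤ => conj (y j) * y (j + 1)) := by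
    apply Summable.of_norm
    refine Summable.of_nonneg_of_le (fun j => norm_nonneg _) (fun j => ?_) hgsum
    rw [norm_mul, RCLike.norm_conj, hg]
    nlinarith [sq_nonneg (‖y (j + 1)‖ - ‖y j‖)]
  have hsum2 : Summable (fun j : ℤ => conj (y (j + 1)) * (b j * y j)) := by
    apply Summable.of_norm
    refine Summable.of_nonneg_of_le (fun j => norm_nonneg _) (fun j => ?_) hcsum
    rw [norm_mul, norm_mul, RCLike.norm_conj, hcnorm]
    calc ‖y (j + 1)‖ * (‖b j‖ * ‖y j‖) ≤ ‖y (j + 1)‖ * (1 * ‖y j‖) := by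
          exact mul_le_mul_of_nonneg_left
            (mul_le_mul_of_nonneg_right (hbnorm j) (norm_nonneg _)) (norm_nonneg _)
      _ = ‖y (j + 1)‖ * ‖y j‖ := by ring
  have hsum2' : Summable (fun j : ℤ => conj (y j) * (b (j - 1) * y (j - 1))) := by
    refine ((Equiv.addRight (1 : ℤ)).summable_iff
      (f := fun j : ℤ => conj (y j) * (b (j - 1) * y (j - 1)))).1 (hsum2.congr fun j => ?_)
    simp only [Function.comp, Equiv.coe_addRight]
    rw [show j + 1 - 1 = j by ring]
  have hinnerb : Z = (∑' j, conj (y j) * y (j + 1))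
      + ∑' j, conj (y j) * (b (j - 1) * y (j - 1)) := by
    rw [hZ, lp.inner_eq_tsum, ← Summable.tsum_add hsum1 hsum2']
    refine tsum_congr fun j => ?_
    rw [hAb x j]
    simp [RCLike.inner_apply, hy]
    ring
  have hT : (∑' j, conj (y j) * (b (j - 1) * y (j - 1))) = ∑' j, b j * c j := by
    rw [← (Equiv.addRight (1 : ℤ)).tsum_eq
      (fun j : ℤ => conj (y j) * (b (j - 1) * y (j - 1)))]
    refine tsum_congr fun j => ?_
    simp only [Equiv.coe_addRight]
    rw [show j + 1 - 1 = j by ring, hc]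
    ring
  have hconjS : conj S = ∑' j, c j := by
    rw [hinner0]
    calc conj (∑' j, conj (y j) * y (j + 1)) = ∑' j, conj (conj (y j) * y (j + 1)) := by
          exact tsum_star
      _ = ∑' j, c j := tsum_congr fun j => by simp [hc]; ring
  -- summabilities over c
  have hcsumC : Summable c := hcsum.of_norm
  have hbcn : Summable (fun j => ‖b j * c j‖) := by
    refine Summable.of_nonneg_of_le (fun j => norm_nonneg _) (fun j => ?_) hcsum
    rw [norm_mul]
    calc ‖b j‖ * ‖c j‖ ≤ 1 * ‖c j‖ :=
          mul_le_mul_of_nonneg_right (hbnorm j) (norm_nonneg _)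
      _ = ‖c j‖ := one_mul _
  have hb1n : Summable (fun j => ‖(b j - 1) * c j‖) := by
    refine Summable.of_nonneg_of_le (fun j => norm_nonneg _) (fun j => ?_) hcsum
    rw [norm_mul]
    have : ‖b j - 1‖ ≤ 1 := by rcases hb j with h | h <;> simp [h]
    calc ‖b j - 1‖ * ‖c j‖ ≤ 1 * ‖c j‖ :=
          mul_le_mul_of_nonneg_right this (norm_nonneg _)
      _ = ‖c j‖ := one_mul _
  have hbc : Summable (fun j => b j * c j) := hbcn.of_norm
  -- identities for the two distances
  have hZS : Z - S = ∑' j, b j * c j := by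
    rw [hinnerb, hinner0, hT]; ring
  have hZ2 : Z - 2 * (S.re : ℂ) = ∑' j, (b j - 1) * c j := by
    have hac : Z - 2 * (S.re : ℂ) = Z - (S + conj S) := by
      rw [Complex.add_conj]; push_cast; ring
    rw [hac, hconjS, show Z - (S + ∑' j, c j) = (Z - S) - ∑' j, c j by ring, hZS,
      ← Summable.tsum_sub hbc hcsumC]
    exact tsum_congr fun j => by ring
  -- final estimate
  have hgoal1 : ‖Z - S‖ ≤ ∑' j, ‖b j * c j‖ := by
    rw [hZS]
    exact norm_tsum_le_tsum_norm hbcn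
  have hgoal2 : ‖Z - 2 * (S.re : ℂ)‖ ≤ ∑' j, ‖(b j - 1) * c j‖ := by
    rw [hZ2]
    exact norm_tsum_le_tsum_norm hb1n
  have hsumeq : (∑' j, ‖b j * c j‖) + (∑' j, ‖(b j - 1) * c j‖) = ∑' j, ‖c j‖ := by
    rw [← Summable.tsum_add hbcn hb1n]
    refine tsum_congr fun j => ?_
    rcases hb j with h | h <;> simp [h, norm_mul]
  calc ‖Z - S‖ + ‖Z - 2 * (S.re : ℂ)‖
      ≤ (∑' j, ‖b j * c j‖) + ∑' j, ‖(b j - 1) * c j‖ := add_le_add hgoal1 hgoal2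
    _ = ∑' j, ‖c j‖ := hsumeq
    _ < 1 := hkey
end
end

section
/- Let b = (b_i)_{i∈ℤ} be a biinfinite sequence with every b_i ∈ {0,1}. Then W(A_b) ⊆ conv(W(A_𝟎) ∪ W(A_𝟏)), the convex hull of the union of the numerical ranges of A_𝟎 and A_𝟏. -/
open scoped ComplexConjugate ENNReal
open Filter

noncomputable section

namespace Stmt4Aux

lemma sq_summable (x : Hseq) : Summable (fun j : ℤ => ‖(x : ℤ → ℂ) j‖ ^ 2) := by
  have h := lp.memℓp x
  rw [memℓp_gen_iff (by norm_num : 0 < (2 : ℝ≥0∞).toReal)] at h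
  have : ∀ j : ℤ, ‖(x : ℤ → ℂ) j‖ ^ ((2 : ℝ≥0∞).toReal) = ‖(x : ℤ → ℂ) j‖ ^ 2 := by
    intro j
    rw [show (2 : ℝ≥0∞).toReal = ((2 : ℕ) : ℝ) by norm_num, Real.rpow_natCast]
  simpa only [this] using h

lemma sq_tsum (x : Hseq) (hx : ‖x‖ = 1) : ∑' j : ℤ, ‖(x : ℤ → ℂ) j‖ ^ 2 = 1 := by
  have h := lp.norm_rpow_eq_tsum (by norm_num : 0 < (2 : ℝ≥0∞).toReal) x
  rw [hx] at h
  have h2 : ∀ y : ℝ, 0 ≤ y → y ^ ((2 : ℝ≥0∞).toReal) = y ^ 2 := by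
    intro y hy
    rw [show (2 : ℝ≥0∞).toReal = ((2 : ℕ) : ℝ) by norm_num, Real.rpow_natCast]
  calc ∑' j : ℤ, ‖(x : ℤ → ℂ) j‖ ^ 2
      = ∑' j : ℤ, ‖(x : ℤ → ℂ) j‖ ^ ((2 : ℝ≥0∞).toReal) := by
        refine tsum_congr fun j => (h2 _ (norm_nonneg _)).symm
    _ = 1 := by rw [← h]; norm_num

lemma summable_shift {f : ℤ → ℝ} (h : Summable f) (n : ℤ) : Summable (fun j => f (j + n)) :=
  ((Equiv.addRight n).summable_iff).2 h

lemma tsum_shift (f : ℤ → ℂ) (n : ℤ) : ∑' j : ℤ, f (j + n) = ∑' j : ℤ, f j :=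
  (Equiv.addRight n).tsum_eq f

lemma tsum_shift' (f : ℤ → ℝ) (n : ℤ) : ∑' j : ℤ, f (j + n) = ∑' j : ℤ, f j :=
  (Equiv.addRight n).tsum_eq f

lemma summable_dom_real (x : Hseq) (n : ℤ) {f : ℤ → ℝ}
    (h0 : ∀ j, 0 ≤ f j)
    (hf : ∀ j, f j ≤ ‖(x : ℤ → ℂ) j‖ * ‖(x : ℤ → ℂ) (j + n)‖) : Summable f := by
  have h1 := sq_summable x
  have h2 := summable_shift h1 n
  refine Summable.of_nonneg_of_le h0 (fun j => ?_) (((h1.add h2).div_const 2))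
  refine le_trans (hf j) ?_
  have := two_mul_le_add_sq ‖(x : ℤ → ℂ) j‖ ‖(x : ℤ → ℂ) (j + n)‖
  simp only [Pi.add_apply]
  nlinarith [this]

lemma summable_dom (x : Hseq) (n : ℤ) {f : ℤ → ℂ}
    (hf : ∀ j, ‖f j‖ ≤ ‖(x : ℤ → ℂ) j‖ * ‖(x : ℤ → ℂ) (j + n)‖) : Summable f :=
  Summable.of_norm (summable_dom_real x n (fun j => norm_nonneg _) hf)


lemma key_lt (x : Hseq) (hx : ‖x‖ = 1) :
    ∑' j : ℤ, ‖(x : ℤ → ℂ) j‖ * ‖(x : ℤ → ℂ) (j - 1)‖ < 1 := by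
  set a : ℤ → ℝ := fun j => ‖(x : ℤ → ℂ) j‖ with ha
  have ha0 : ∀ j, 0 ≤ a j := fun j => norm_nonneg _
  have h1 : Summable (fun j : ℤ => a j ^ 2) := sq_summable x
  have h1' : Summable (fun j : ℤ => a (j - 1) ^ 2) := by
    have := summable_shift h1 (-1)
    simpa [sub_eq_add_neg] using this
  have hg : Summable (fun j : ℤ => (a j ^ 2 + a (j - 1) ^ 2) / 2) := (h1.add h1').div_const 2
  have hf : Summable (fun j : ℤ => a j * a (j - 1)) := by
    refine summable_dom_real x (-1) (fun j => mul_nonneg (ha0 j) (ha0 _)) (fun j => ?_)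
    simp [ha, sub_eq_add_neg]
  -- pointwise bound
  have hle : ∀ j : ℤ, a j * a (j - 1) ≤ (a j ^ 2 + a (j - 1) ^ 2) / 2 := by
    intro j; nlinarith [sq_nonneg (a j - a (j - 1))]
  -- strict at some point
  have hne : ∃ j₀ : ℤ, a j₀ ≠ a (j₀ - 1) := by
    by_contra hcon
    push_neg at hcon
    have hconst : ∀ j : ℤ, a j = a 0 := by
      intro j
      induction j using Int.induction_on with
      | zero => rfl
      | succ n ih =>
          have h := hcon ((n : ℤ) + 1)
          rw [show ((n : ℤ) + 1 - 1) = (n : ℤ) by ring] at h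
          rw [h, ih]
      | pred n ih =>
          have h := hcon (-(n : ℤ))
          rw [← h, ih]
    have : Summable (fun _ : ℤ => a 0 ^ 2) := by
      refine h1.congr fun j => by rw [hconst j]
    rw [summable_const_iff] at this
    have h0 : a 0 = 0 := by
      have := sq_eq_zero_iff.mp this; exact this
    have := sq_tsum x hx
    rw [show (fun j : ℤ => ‖(x : ℤ → ℂ) j‖ ^ 2) = fun j : ℤ => a j ^ 2 from rfl] at this
    have hzero : ∀ j : ℤ, a j ^ 2 = 0 := fun j => by rw [hconst j, h0]; ring
    rw [tsum_congr hzero] at this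
    simp at this
  obtain ⟨j₀, hj₀⟩ := hne
  have hstrict : a j₀ * a (j₀ - 1) < (a j₀ ^ 2 + a (j₀ - 1) ^ 2) / 2 := by
    have hpos : 0 < (a j₀ - a (j₀ - 1)) ^ 2 := sq_pos_of_ne_zero (sub_ne_zero.mpr hj₀)
    nlinarith [hpos]
  have hlt := Summable.tsum_lt_tsum hle hstrict hf hg
  have hgval : ∑' j : ℤ, (a j ^ 2 + a (j - 1) ^ 2) / 2 = 1 := by
    rw [tsum_div_const, Summable.tsum_add h1 h1']
    have : ∑' j : ℤ, a (j - 1) ^ 2 = ∑' j : ℤ, a j ^ 2 := by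
      have := tsum_shift' (fun j => a j ^ 2) (-1)
      simpa [sub_eq_add_neg] using this
    rw [this, sq_tsum x hx]
    norm_num
  rw [hgval] at hlt
  exact hlt

lemma exists_geom (w : ℂ) (hw : ‖w‖ < 1) :
    ∃ x : Hseq, ‖x‖ = 1 ∧
      (∑' j : ℤ, (starRingEnd ℂ) ((x : ℤ → ℂ) j) * (x : ℤ → ℂ) (j + 1)) = w ∧
      (∑' j : ℤ, (starRingEnd ℂ) ((x : ℤ → ℂ) j) * (x : ℤ → ℂ) (j - 1)) = conj w := by
  set r : ℝ := ‖w‖ ^ 2 with hrdef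
  have hr0 : 0 ≤ r := sq_nonneg _
  have hr1 : r < 1 := by nlinarith [norm_nonneg w]
  set c : ℝ := Real.sqrt (1 - r) with hcdef
  have hc0 : 0 ≤ c := Real.sqrt_nonneg _
  have hc2 : c ^ 2 = 1 - r := Real.sq_sqrt (by linarith)
  set f : ℤ → ℂ := fun j => if 0 ≤ j then (c : ℂ) * w ^ j.toNat else 0 with hfdef
  have hfn : ∀ n : ℕ, f (n : ℤ) = (c : ℂ) * w ^ n := by
    intro n; simp [hfdef]
  have hfneg : ∀ j : ℤ, j < 0 → f j = 0 := by
    intro j hj; simp [hfdef, not_le.mpr hj]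
  -- norm squared values
  have hnf : ∀ n : ℕ, ‖f (n : ℤ)‖ ^ 2 = c ^ 2 * r ^ n := by
    intro n
    rw [hfn n]
    rw [norm_mul, norm_pow, Complex.norm_real, Real.norm_of_nonneg hc0]
    rw [mul_pow, ← pow_mul, hrdef, ← pow_mul, Nat.mul_comm]
  -- conj w * w
  have hcw : (starRingEnd ℂ) w * w = ((r : ℝ) : ℂ) := by
    rw [← Complex.normSq_eq_conj_mul_self, hrdef]
    norm_cast
    rw [← Complex.sq_norm]
  -- summability over ℕ of the geometric
  have hgeoR : Summable (fun n : ℕ => c ^ 2 * r ^ n) :=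
    (summable_geometric_of_lt_one hr0 hr1).mul_left _
  -- membership
  have h2exp : ∀ y : ℝ, y ^ (2 : ℝ≥0∞).toReal = y ^ 2 := fun y => by
    rw [show (2 : ℝ≥0∞).toReal = ((2 : ℕ) : ℝ) by norm_num, Real.rpow_natCast]
  have hsupport : ∀ j ∉ Set.range (fun n : ℕ => (n : ℤ)), ‖f j‖ ^ 2 = 0 := by
    intro j hj
    rcases lt_or_ge j 0 with h | h
    · rw [hfneg j h]; simp
    · exact absurd ⟨j.toNat, by simpa using Int.toNat_of_nonneg h⟩ hj
  have hsum2 : Summable (fun j : ℤ => ‖f j‖ ^ 2) := by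
    rw [← Function.Injective.summable_iff (fun a b h => by simpa using h : Function.Injective (fun n : ℕ => (n : ℤ))) hsupport]
    exact hgeoR.congr fun n => (hnf n).symm
  have hmem : Memℓp f 2 := by
    apply memℓp_gen
    simpa only [h2exp] using hsum2
  have hrC : ‖((r : ℝ) : ℂ)‖ < 1 := by
    rw [Complex.norm_real, Real.norm_of_nonneg hr0]; exact hr1
  have hgeoC : ∑' n : ℕ, ((r : ℝ) : ℂ) ^ n = (1 - ((r : ℝ) : ℂ))⁻¹ :=
    tsum_geometric_of_norm_lt_one hrC
  have hr1c : (1 : ℂ) - ((r : ℝ) : ℂ) = ((1 - r : ℝ) : ℂ) := by push_cast; ring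
  have hr1ne : ((1 - r : ℝ) : ℂ) ≠ 0 := by
    simp only [ne_eq, Complex.ofReal_eq_zero]
    intro h; linarith
  have hc2C : ((c : ℝ) : ℂ) ^ 2 = ((1 - r : ℝ) : ℂ) := by
    rw [← Complex.ofReal_pow, hc2]
  refine ⟨⟨f, hmem⟩, ?_, ?_, ?_⟩
  · -- norm one
    have hx : ∀ j, ((⟨f, hmem⟩ : Hseq) : ℤ → ℂ) j = f j := fun j => rfl
    have hnorm := lp.norm_rpow_eq_tsum (by norm_num : 0 < (2 : ℝ≥0∞).toReal)
      (⟨f, hmem⟩ : Hseq)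
    simp only [h2exp, hx] at hnorm
    have htsum : ∑' j : ℤ, ‖f j‖ ^ 2 = 1 := by
      rw [← Function.Injective.tsum_eq
        (fun a b h => by simpa using h : Function.Injective (fun n : ℕ => (n : ℤ)))
        (fun j hj => by by_contra h; exact hj (hsupport j h))]
      have : ∑' n : ℕ, ‖f ((n : ℕ) : ℤ)‖ ^ 2 = ∑' n : ℕ, c ^ 2 * r ^ n :=
        tsum_congr fun n => hnf n
      rw [this, tsum_mul_left, tsum_geometric_of_lt_one hr0 hr1, hc2]
      exact div_self (by linarith : (1:ℝ) - r ≠ 0)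
    rw [htsum] at hnorm
    rw [← Real.sqrt_one, ← hnorm, Real.sqrt_sq (norm_nonneg _)]
  · -- forward sum = w
    have hx : ∀ j, ((⟨f, hmem⟩ : Hseq) : ℤ → ℂ) j = f j := fun j => rfl
    simp only [hx]
    have hsupp : ∀ j ∉ Set.range (fun n : ℕ => (n : ℤ)),
        (starRingEnd ℂ) (f j) * f (j + 1) = 0 := by
      intro j hj
      rcases lt_or_ge j 0 with h | h
      · rw [hfneg j h]; simp
      · exact absurd ⟨j.toNat, by simpa using Int.toNat_of_nonneg h⟩ hj
    rw [← Function.Injective.tsum_eq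
      (fun a b h => by simpa using h : Function.Injective (fun n : ℕ => (n : ℤ)))
      (fun j hj => by by_contra h; exact hj (hsupp j h))]
    have hterm : ∀ n : ℕ, (starRingEnd ℂ) (f ((n : ℕ) : ℤ)) * f (((n : ℕ) : ℤ) + 1)
        = ((c : ℝ) : ℂ) ^ 2 * w * ((r : ℝ) : ℂ) ^ n := by
      intro n
      have h1 : (((n : ℕ) : ℤ) + 1) = (((n + 1 : ℕ) : ℕ) : ℤ) := by push_cast; ring
      rw [h1, hfn n, hfn (n + 1)]
      rw [map_mul, Complex.conj_ofReal, map_pow]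
      have : ((starRingEnd ℂ) w) ^ n * w ^ (n + 1)
          = ((starRingEnd ℂ) w * w) ^ n * w := by ring
      calc ((c:ℝ):ℂ) * (starRingEnd ℂ) w ^ n * (((c:ℝ):ℂ) * w ^ (n+1))
          = ((c:ℝ):ℂ) ^ 2 * ((starRingEnd ℂ) w ^ n * w ^ (n+1)) := by ring
        _ = ((c:ℝ):ℂ) ^ 2 * (((starRingEnd ℂ) w * w) ^ n * w) := by rw [this]
        _ = ((c:ℝ):ℂ) ^ 2 * w * ((r : ℝ) : ℂ) ^ n := by rw [hcw]; ring
    have hne : (1 : ℂ) - ((r:ℝ):ℂ) ≠ 0 := by rw [hr1c]; exact hr1ne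
    rw [tsum_congr hterm, tsum_mul_left, hgeoC]
    rw [mul_comm (((c:ℝ):ℂ)^2) w, mul_assoc, hc2C, ← hr1c,
      mul_inv_cancel₀ hne, mul_one]
  · -- backward sum = conj w
    have hx : ∀ j, ((⟨f, hmem⟩ : Hseq) : ℤ → ℂ) j = f j := fun j => rfl
    simp only [hx]
    have hinj : Function.Injective (fun n : ℕ => (n : ℤ) + 1) := by
      intro a b h; simpa using h
    have hsupp : ∀ j ∉ Set.range (fun n : ℕ => (n : ℤ) + 1),
        (starRingEnd ℂ) (f j) * f (j - 1) = 0 := by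
      intro j hj
      rcases lt_or_ge j 1 with h | h
      · rw [hfneg (j - 1) (by omega)]; simp
      · exact absurd ⟨(j - 1).toNat, by show ((j - 1).toNat : ℤ) + 1 = j; omega⟩ hj
    rw [← Function.Injective.tsum_eq hinj
      (fun j hj => by by_contra h; exact hj (hsupp j h))]
    have hterm : ∀ n : ℕ, (starRingEnd ℂ) (f ((n : ℤ) + 1)) * f (((n : ℤ) + 1) - 1)
        = ((c : ℝ) : ℂ) ^ 2 * (starRingEnd ℂ) w * ((r : ℝ) : ℂ) ^ n := by
      intro n
      have h1 : ((n : ℤ) + 1) = (((n + 1 : ℕ) : ℕ) : ℤ) := by push_cast; ring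
      have h2 : (((n : ℤ) + 1) - 1) = ((n : ℕ) : ℤ) := by push_cast; ring
      rw [h2, h1, hfn (n + 1), hfn n]
      rw [map_mul, Complex.conj_ofReal, map_pow]
      calc ((c:ℝ):ℂ) * (starRingEnd ℂ) w ^ (n+1) * (((c:ℝ):ℂ) * w ^ n)
          = ((c:ℝ):ℂ) ^ 2 * (starRingEnd ℂ) w * (((starRingEnd ℂ) w * w) ^ n) := by ring
        _ = _ := by rw [hcw]
    have hne : (1 : ℂ) - ((r:ℝ):ℂ) ≠ 0 := by rw [hr1c]; exact hr1ne
    rw [tsum_congr hterm, tsum_mul_left, hgeoC]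
    rw [mul_comm (((c:ℝ):ℂ)^2) ((starRingEnd ℂ) w), mul_assoc, hc2C, ← hr1c,
      mul_inv_cancel₀ hne, mul_one]


lemma inner_tsum (A : Hseq →L[ℂ] Hseq) (x : Hseq) :
    (inner (𝕜 := ℂ) x (A x) : ℂ)
      = ∑' j : ℤ, (starRingEnd ℂ) ((x : ℤ → ℂ) j) * ((A x : ℤ → ℂ) j) := by
  rw [lp.inner_eq_tsum]
  exact tsum_congr fun j => by rw [RCLike.inner_apply, mul_comm]

lemma summable_fwd (x : Hseq) :
    Summable (fun j : ℤ => (starRingEnd ℂ) ((x : ℤ → ℂ) j) * (x : ℤ → ℂ) (j + 1)) :=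
  summable_dom x 1 fun j => by rw [norm_mul, RCLike.norm_conj]

lemma summable_bwd (x : Hseq) (c : ℤ → ℂ) (hc : ∀ i, ‖c i‖ ≤ 1) :
    Summable (fun j : ℤ => c (j - 1) * ((starRingEnd ℂ) ((x : ℤ → ℂ) j) * (x : ℤ → ℂ) (j - 1))) := by
  refine summable_dom x (-1) fun j => ?_
  rw [show j + (-1 : ℤ) = j - 1 by ring, norm_mul, norm_mul, RCLike.norm_conj]
  calc ‖c (j - 1)‖ * (‖(x : ℤ → ℂ) j‖ * ‖(x : ℤ → ℂ) (j - 1)‖)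
      ≤ 1 * (‖(x : ℤ → ℂ) j‖ * ‖(x : ℤ → ℂ) (j - 1)‖) := by
        exact mul_le_mul_of_nonneg_right (hc _) (by positivity)
    _ = _ := one_mul _

lemma mem_A0 (A0 : Hseq →L[ℂ] Hseq) (hA0 : IsTridiag (fun _ => (0 : ℂ)) A0)
    (w : ℂ) (hw : ‖w‖ < 1) : w ∈ numRange A0 := by
  obtain ⟨x, hx1, hx2, _⟩ := exists_geom w hw
  refine ⟨x, hx1, ?_⟩
  rw [inner_tsum]
  rw [← hx2]
  refine tsum_congr fun j => ?_
  rw [hA0 x j]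
  ring

lemma mem_A1 (A1 : Hseq →L[ℂ] Hseq) (hA1 : IsTridiag (fun _ => (1 : ℂ)) A1)
    (w : ℂ) (hw : ‖w‖ < 1) : w + conj w ∈ numRange A1 := by
  obtain ⟨x, hx1, hx2, hx3⟩ := exists_geom w hw
  refine ⟨x, hx1, ?_⟩
  rw [inner_tsum]
  have h1 : ∀ j : ℤ, (starRingEnd ℂ) ((x : ℤ → ℂ) j) * ((A1 x : ℤ → ℂ) j)
      = (starRingEnd ℂ) ((x : ℤ → ℂ) j) * (x : ℤ → ℂ) (j + 1)
        + (1 : ℂ) * ((starRingEnd ℂ) ((x : ℤ → ℂ) j) * (x : ℤ → ℂ) (j - 1)) := by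
    intro j; rw [hA1 x j]; ring
  rw [tsum_congr h1, Summable.tsum_add (summable_fwd x) (summable_bwd x (fun _ => 1) (by simp)), hx2]
  rw [← hx3]
  congr 1
  exact tsum_congr fun j => (one_mul _)


end Stmt4Aux

open Stmt4Aux

/-- For `{0,1}`-valued `b`, `W(A_b) ⊆ conv(W(A_𝟎) ∪ W(A_𝟏))`. -/
theorem stmt4 (b : ℤ → ℂ) (hb : ∀ i, b i = 0 ∨ b i = 1)
    (Ab : Hseq →L[ℂ] Hseq) (hAb : IsTridiag b Ab)
    (A0 : Hseq →L[ℂ] Hseq) (hA0 : IsTridiag (fun _ => (0 : ℂ)) A0)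
    (A1 : Hseq →L[ℂ] Hseq) (hA1 : IsTridiag (fun _ => (1 : ℂ)) A1) :
    numRange Ab ⊆ convexHull ℝ (numRange A0 ∪ numRange A1) := by
  rintro z ⟨x, hx, hz⟩
  have hb1 : ∀ i, ‖b i‖ ≤ 1 := fun i => by rcases hb i with h | h <;> simp [h]
  have hb1' : ∀ i, ‖1 - b i‖ ≤ 1 := fun i => by rcases hb i with h | h <;> simp [h]
  set a : ℤ → ℝ := fun j => ‖(x : ℤ → ℂ) j‖ with ha
  set g : ℤ → ℂ := fun j => (starRingEnd ℂ) ((x : ℤ → ℂ) j) * (x : ℤ → ℂ) (j - 1) with hg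
  set S : ℂ := ∑' j : ℤ, (starRingEnd ℂ) ((x : ℤ → ℂ) j) * (x : ℤ → ℂ) (j + 1) with hS
  set U : ℂ := ∑' j : ℤ, b (j - 1) * g j with hU
  set V : ℂ := ∑' j : ℤ, (1 - b (j - 1)) * g j with hV
  have hSsum := summable_fwd x
  have hUsum : Summable (fun j : ℤ => b (j - 1) * g j) := summable_bwd x b hb1
  have hVsum : Summable (fun j : ℤ => (1 - b (j - 1)) * g j) :=
    summable_bwd x (fun i => 1 - b i) hb1'
  -- z = S + U
  have hzSU : z = S + U := by
    rw [← hz, inner_tsum]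
    have h1 : ∀ j : ℤ, (starRingEnd ℂ) ((x : ℤ → ℂ) j) * ((Ab x : ℤ → ℂ) j)
        = (starRingEnd ℂ) ((x : ℤ → ℂ) j) * (x : ℤ → ℂ) (j + 1) + b (j - 1) * g j := by
      intro j; rw [hAb x j, hg]; ring
    rw [tsum_congr h1, Summable.tsum_add hSsum hUsum]
  -- conj S = U + V
  have hconjS : (starRingEnd ℂ) S = U + V := by
    have h1 : (starRingEnd ℂ) S
        = ∑' j : ℤ, (starRingEnd ℂ) ((x : ℤ → ℂ) (j + 1)) * (x : ℤ → ℂ) j := by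
      rw [hS]
      show star (∑' j : ℤ, (starRingEnd ℂ) ((x : ℤ → ℂ) j) * (x : ℤ → ℂ) (j + 1)) = _
      rw [tsum_star]
      refine tsum_congr fun j => ?_
      simp only [star_mul', Complex.star_def, Complex.conj_conj]
      ring
    have h2 : ∑' j : ℤ, (starRingEnd ℂ) ((x : ℤ → ℂ) (j + 1)) * (x : ℤ → ℂ) j
        = ∑' j : ℤ, g j := by
      have := (Equiv.addRight (1 : ℤ)).tsum_eq g
      rw [← this]
      refine tsum_congr fun j => ?_
      simp [hg, Equiv.coe_addRight, add_sub_cancel_right]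
    have h3 : ∑' j : ℤ, g j = U + V := by
      have hpt : ∀ j : ℤ, g j = b (j - 1) * g j + (1 - b (j - 1)) * g j := by
        intro j; ring
      rw [tsum_congr hpt, Summable.tsum_add hUsum hVsum]
    rw [h1, h2, h3]
  -- norm bounds
  have haa : Summable (fun j : ℤ => a j * a (j - 1)) := by
    refine summable_dom_real x (-1) (fun j => mul_nonneg (norm_nonneg _) (norm_nonneg _))
      (fun j => ?_)
    rw [show j + (-1 : ℤ) = j - 1 by ring]
  have hbn : Summable (fun j : ℤ => ‖b (j - 1)‖ * (a j * a (j - 1))) := by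
    refine summable_dom_real x (-1) (fun j => by positivity) (fun j => ?_)
    rw [show j + (-1 : ℤ) = j - 1 by ring]
    calc ‖b (j - 1)‖ * (a j * a (j - 1)) ≤ 1 * (a j * a (j - 1)) :=
          mul_le_mul_of_nonneg_right (hb1 _) (by positivity)
      _ = a j * a (j - 1) := one_mul _
  have hbn' : Summable (fun j : ℤ => ‖1 - b (j - 1)‖ * (a j * a (j - 1))) := by
    refine summable_dom_real x (-1) (fun j => by positivity) (fun j => ?_)
    rw [show j + (-1 : ℤ) = j - 1 by ring]
    calc ‖1 - b (j - 1)‖ * (a j * a (j - 1)) ≤ 1 * (a j * a (j - 1)) :=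
          mul_le_mul_of_nonneg_right (hb1' _) (by positivity)
      _ = a j * a (j - 1) := one_mul _
  have hUle : ‖U‖ ≤ ∑' j : ℤ, ‖b (j - 1)‖ * (a j * a (j - 1)) := by
    rw [hU]
    refine le_trans (norm_tsum_le_tsum_norm ?_) ?_
    · exact hbn.congr fun j => by rw [norm_mul, hg, norm_mul, RCLike.norm_conj]
    · exact le_of_eq (tsum_congr fun j => by rw [norm_mul, hg, norm_mul, RCLike.norm_conj])
  have hVle : ‖V‖ ≤ ∑' j : ℤ, ‖1 - b (j - 1)‖ * (a j * a (j - 1)) := by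
    rw [hV]
    refine le_trans (norm_tsum_le_tsum_norm ?_) ?_
    · exact hbn'.congr fun j => by rw [norm_mul, hg, norm_mul, RCLike.norm_conj]
    · exact le_of_eq (tsum_congr fun j => by rw [norm_mul, hg, norm_mul, RCLike.norm_conj])
  have hsplit : (∑' j : ℤ, ‖b (j - 1)‖ * (a j * a (j - 1)))
      + (∑' j : ℤ, ‖1 - b (j - 1)‖ * (a j * a (j - 1)))
      = ∑' j : ℤ, a j * a (j - 1) := by
    rw [← Summable.tsum_add hbn hbn']
    refine tsum_congr fun j => ?_
    have hone : ‖b (j - 1)‖ + ‖1 - b (j - 1)‖ = 1 := by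
      rcases hb (j - 1) with h | h <;> simp [h]
    calc ‖b (j - 1)‖ * (a j * a (j - 1)) + ‖1 - b (j - 1)‖ * (a j * a (j - 1))
        = (‖b (j - 1)‖ + ‖1 - b (j - 1)‖) * (a j * a (j - 1)) := by ring
      _ = a j * a (j - 1) := by rw [hone, one_mul]
  have huv : ‖U‖ + ‖V‖ < 1 := by
    have := key_lt x hx
    have h2 : ‖U‖ + ‖V‖ ≤ ∑' j : ℤ, a j * a (j - 1) := by
      rw [← hsplit]; exact add_le_add hUle hVle
    exact lt_of_le_of_lt h2 this
  -- set up convex combination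
  set u : ℝ := ‖U‖ with hu
  set v : ℝ := ‖V‖ with hv
  have hu0 : 0 ≤ u := norm_nonneg _
  have hv0 : 0 ≤ v := norm_nonneg _
  set t : ℝ := (u + (1 - v)) / 2 with hT
  have ht0 : 0 < t := by rw [hT]; linarith
  have htu : u < t := by rw [hT]; linarith
  have htv : v < 1 - t := by rw [hT]; linarith
  have ht1 : t < 1 := by rw [hT]; linarith
  set p : ℝ := 2 * U.re / t with hp
  set q : ℂ := (starRingEnd ℂ) V / ((1 - t : ℝ) : ℂ) with hq
  have hrebound : |U.re| ≤ u := Complex.abs_re_le_norm U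
  have hpbound : |p| < 2 := by
    rw [hp, abs_div, abs_of_pos ht0]
    rw [div_lt_iff₀ ht0]
    calc |2 * U.re| = 2 * |U.re| := by rw [abs_mul]; norm_num
      _ ≤ 2 * u := by linarith
      _ < 2 * t := by linarith
  have hqbound : ‖q‖ < 1 := by
    rw [hq, norm_div, RCLike.norm_conj]
    rw [Complex.norm_real, Real.norm_of_nonneg (by linarith : (0:ℝ) ≤ 1 - t)]
    rw [div_lt_one (by linarith : (0:ℝ) < 1 - t)]
    exact htv
  -- memberships
  have hpmem : ((p : ℝ) : ℂ) ∈ numRange A1 := by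
    have h := mem_A1 A1 hA1 ((p / 2 : ℝ) : ℂ) (by
      rw [Complex.norm_real, Real.norm_eq_abs, abs_div]
      rw [abs_of_pos (by norm_num : (0:ℝ) < 2)]
      linarith)
    have : ((p / 2 : ℝ) : ℂ) + conj ((p / 2 : ℝ) : ℂ) = ((p : ℝ) : ℂ) := by
      rw [Complex.conj_ofReal]; push_cast; ring
    rwa [this] at h
  have hqmem : q ∈ numRange A0 := mem_A0 A0 hA0 q hqbound
  -- the combination
  have hcomb : z = t • ((p : ℝ) : ℂ) + (1 - t) • q := by
    rw [hzSU]
    have hSU : S = (starRingEnd ℂ) U + (starRingEnd ℂ) V := by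
      have := congrArg (starRingEnd ℂ) hconjS
      simpa [map_add] using this
    rw [hSU]
    have htC : ((t : ℝ) : ℂ) ≠ 0 := by
      simp only [ne_eq, Complex.ofReal_eq_zero]; exact ht0.ne'
    have h1 : t • ((p : ℝ) : ℂ) = ((2 * U.re : ℝ) : ℂ) := by
      rw [Complex.real_smul, hp]
      push_cast
      rw [mul_comm, div_mul_cancel₀ _ htC]
    have h2 : (1 - t) • q = (starRingEnd ℂ) V := by
      have hne : ((1 - t : ℝ) : ℂ) ≠ 0 := by
        simp only [ne_eq, Complex.ofReal_eq_zero]; intro h; linarith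
      rw [Complex.real_smul, hq, mul_comm, div_mul_cancel₀ _ hne]
    rw [h1, h2]
    have : U + (starRingEnd ℂ) U = ((2 * U.re : ℝ) : ℂ) := by
      rw [Complex.add_conj]
    calc (starRingEnd ℂ) U + (starRingEnd ℂ) V + U
        = (U + (starRingEnd ℂ) U) + (starRingEnd ℂ) V := by ring
      _ = ((2 * U.re : ℝ) : ℂ) + (starRingEnd ℂ) V := by rw [this]
  rw [hcomb]
  have hps : ((p : ℝ) : ℂ) ∈ convexHull ℝ (numRange A0 ∪ numRange A1) :=
    subset_convexHull ℝ (numRange A0 ∪ numRange A1) (Or.inr hpmem)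
  have hqs : q ∈ convexHull ℝ (numRange A0 ∪ numRange A1) :=
    subset_convexHull ℝ (numRange A0 ∪ numRange A1) (Or.inl hqmem)
  exact (convex_convexHull ℝ (numRange A0 ∪ numRange A1)) hps hqs
    ht0.le (by linarith : (0:ℝ) ≤ 1 - t) (by ring : t + (1 - t) = 1)
end
end

section
/- Let b = (b_i)_{i∈ℤ} be a biinfinite sequence with every b_i ∈ {0,1}. If the constant sequence 𝟎 belongs to the closure of the shift orbit of b (in the product topology on {0,1}^ℤ), then the open unit disk {z ∈ ℂ : |z| < 1} is contained in W(A_b). -/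
open scoped ComplexConjugate ENNReal
open Filter

noncomputable section

lemma exists_coeffs (r : ℝ) (hr0 : 0 ≤ r) (hr1 : r < 1) :
    ∃ N : ℕ, ∃ a : ℕ → ℝ,
      (∑ j ∈ Finset.range (N + 1), (a j) ^ 2) = 1 ∧
      (∑ j ∈ Finset.range N, a j * a (j + 1)) = r := by
  obtain ⟨N, hN⟩ : ∃ N : ℕ, r ≤ (N : ℝ) / (N + 1) := by
    obtain ⟨N, hN⟩ := exists_nat_ge (r / (1 - r))
    refine ⟨N, ?_⟩
    rw [div_le_iff₀ (by linarith)] at hN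
    rw [le_div_iff₀ (by positivity)]
    nlinarith
  set S : ℝ → ℝ := fun s => ∑ j ∈ Finset.range (N + 1), (s ^ 2) ^ j with hS
  set P : ℝ → ℝ := fun s => ∑ j ∈ Finset.range N, (s ^ 2) ^ j with hP
  have hSpos : ∀ s, 0 < S s := by
    intro s
    have h1 : (1 : ℝ) ≤ S s := by
      have := Finset.single_le_sum (f := fun j => (s ^ 2) ^ j)
        (fun j _ => by positivity) (Finset.mem_range.2 (Nat.succ_pos N))
      simpa using this
    linarith
  set g : ℝ → ℝ := fun s => s * P s / S s with hg
  have hgc : Continuous g := by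
    apply Continuous.div
    · exact continuous_id.mul (continuous_finset_sum _ (fun j _ => by continuity))
    · exact continuous_finset_sum _ (fun j _ => by continuity)
    · exact fun s => (hSpos s).ne'
  have hg0 : g 0 = 0 := by simp [hg]
  have hg1 : g 1 = (N : ℝ) / (N + 1) := by simp [hg, hP, hS]
  have : r ∈ Set.Icc (g 0) (g 1) := by rw [hg0, hg1]; exact ⟨hr0, hN⟩
  obtain ⟨s, hs01, hgs⟩ := intermediate_value_Icc (zero_le_one) hgc.continuousOn this
  refine ⟨N, fun j => s ^ j / Real.sqrt (S s), ?_, ?_⟩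
  · have h2 : ∀ j, (s ^ j / Real.sqrt (S s)) ^ 2 = (s ^ 2) ^ j / S s := by
      intro j
      rw [div_pow, Real.sq_sqrt (hSpos s).le, ← pow_mul, ← pow_mul, Nat.mul_comm]
    simp only [h2]
    rw [← Finset.sum_div, div_eq_one_iff_eq (hSpos s).ne']
  · have h2 : ∀ j, (s ^ j / Real.sqrt (S s)) * (s ^ (j+1) / Real.sqrt (S s))
        = s * (s ^ 2) ^ j / S s := by
      intro j
      rw [div_mul_div_comm, Real.mul_self_sqrt (hSpos s).le, ← pow_add]
      ring_nf
    simp only [h2]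
    rw [← Finset.sum_div, ← Finset.mul_sum, ← hgs, hg]

lemma zero_block (b : ℤ → ℂ) (hb : ∀ i, b i = 0 ∨ b i = 1)
    (h0 : (fun _ : ℤ => (0 : ℂ)) ∈ closure (shiftOrbit b)) (N : ℕ) :
    ∃ n : ℤ, ∀ k : ℕ, k < N → b ((k : ℤ) + n) = 0 := by
  have hU : (Set.Ico (0:ℤ) N).pi (fun _ => Metric.ball (0:ℂ) 1) ∈
      nhds (fun _ : ℤ => (0 : ℂ)) :=
    set_pi_mem_nhds (Set.finite_Ico _ _) (fun i _ => Metric.ball_mem_nhds _ one_pos)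
  obtain ⟨c, hcU, hcO⟩ := mem_closure_iff_nhds.mp h0 _ hU
  obtain ⟨n, rfl⟩ := hcO
  refine ⟨n, fun k hk => ?_⟩
  have hmem : (k : ℤ) ∈ Set.Ico (0:ℤ) (N:ℤ) := ⟨Int.ofNat_nonneg k, by exact_mod_cast hk⟩
  have h2 := hcU (k : ℤ) hmem
  simp only [Metric.mem_ball, dist_zero_right] at h2
  rcases hb ((k : ℤ) + n) with h | h
  · exact h
  · rw [h] at h2; norm_num at h2

lemma single_coe (i : ℤ) (a : ℂ) (k : ℤ) :
    (lp.single (E := fun _ : ℤ => ℂ) 2 i a : ℤ → ℂ) k = if k = i then a else 0 := by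
  by_cases h : k = i
  · subst h; simp [lp.single_apply_self]
  · simp [lp.single_apply_ne (E := fun _ : ℤ => ℂ) 2 i a h, h]

/-- If the constant sequence `𝟎` lies in the closure of the shift orbit of the
`{0,1}`-valued sequence `b`, then the open unit disk is contained in `W(A_b)`. -/
theorem stmt5 (b : ℤ → ℂ) (hb : ∀ i, b i = 0 ∨ b i = 1)
    (Ab : Hseq →L[ℂ] Hseq) (hAb : IsTridiag b Ab)
    (h0 : (fun _ : ℤ => (0 : ℂ)) ∈ closure (shiftOrbit b)) :
    {z : ℂ | ‖z‖ < 1} ⊆ numRange Ab := by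
  intro z hz
  have hz1 : ‖z‖ < 1 := hz
  set r : ℝ := ‖z‖ with hrdef
  have hr0 : 0 ≤ r := norm_nonneg z
  obtain ⟨N, a, ha1, har⟩ := exists_coeffs r hr0 hz1
  obtain ⟨n, hn⟩ := zero_block b hb h0 N
  set u : ℂ := if z = 0 then 1 else z / (r : ℂ) with hudef
  have hu1 : conj u * u = 1 := by
    by_cases hz0 : z = 0
    · simp [hudef, hz0]
    · have habs : ‖u‖ = 1 := by
        rw [hudef, if_neg hz0, norm_div, Complex.norm_of_nonneg hr0, hrdef,
          div_self (norm_ne_zero_iff.mpr hz0)]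
      rw [mul_comm, Complex.mul_conj]
      norm_num [Complex.normSq_eq_norm_sq, habs]
  have huz : (r : ℂ) * u = z := by
    by_cases hz0 : z = 0
    · simp [hudef, hz0, hrdef]
    · have hrne : (r : ℂ) ≠ 0 := by
        simp only [Complex.ofReal_ne_zero, hrdef]
        exact norm_ne_zero_iff.mpr hz0
      rw [hudef, if_neg hz0, mul_div_cancel₀ _ hrne]
  set w : ℕ → ℂ := fun j => (a j : ℂ) * u ^ j with hwdef
  set x : Hseq := ∑ j ∈ Finset.range (N + 1), lp.single 2 ((j : ℤ) + n) (w j) with hxdef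
  have hxval : ∀ k : ℤ, (x : ℤ → ℂ) k
      = ∑ j ∈ Finset.range (N + 1), if k = (j : ℤ) + n then w j else 0 := by
    intro k
    rw [hxdef, lp.coeFn_sum, Finset.sum_apply]
    exact Finset.sum_congr rfl fun j _ => single_coe _ _ _
  have hx_at : ∀ j : ℕ, j ≤ N → (x : ℤ → ℂ) ((j : ℤ) + n) = w j := by
    intro j hj
    rw [hxval]
    simp only [add_left_inj, Nat.cast_inj]
    rw [Finset.sum_ite_eq, if_pos (Finset.mem_range.2 (by omega))]
  have hx_zero : ∀ k : ℤ, (∀ j : ℕ, j ≤ N → k ≠ (j : ℤ) + n) → (x : ℤ → ℂ) k = 0 := by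
    intro k hk
    rw [hxval]
    refine Finset.sum_eq_zero fun j hj => if_neg (hk j ?_)
    have := Finset.mem_range.mp hj
    omega
  have hswap : ∀ y : Hseq, (inner (𝕜 := ℂ) x y : ℂ)
      = ∑ j ∈ Finset.range (N + 1), conj (w j) * (y : ℤ → ℂ) ((j : ℤ) + n) := by
    intro y
    rw [hxdef, sum_inner]
    exact Finset.sum_congr rfl fun j _ => by
      rw [lp.inner_single_left, RCLike.inner_apply']
  have hxx : (inner (𝕜 := ℂ) x x : ℂ) = 1 := by
    rw [hswap x]
    have h1 : ∀ j ∈ Finset.range (N + 1),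
        conj (w j) * (x : ℤ → ℂ) ((j : ℤ) + n) = ((a j ^ 2 : ℝ) : ℂ) := by
      intro j hj
      rw [hx_at j (by have := Finset.mem_range.mp hj; omega), hwdef]
      simp only []
      push_cast
      calc conj ((a j : ℂ) * u ^ j) * ((a j : ℂ) * u ^ j)
          = (a j : ℂ) ^ 2 * (conj u * u) ^ j := by
            rw [map_mul, map_pow, Complex.conj_ofReal]; ring
        _ = (a j : ℂ) ^ 2 := by rw [hu1, one_pow, mul_one]
    rw [Finset.sum_congr rfl h1, ← Complex.ofReal_sum, ha1, Complex.ofReal_one]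
  have hnorm : ‖x‖ = 1 := by
    have hxr : ‖x‖ * ‖x‖ = 1 := by
      rw [← inner_self_eq_norm_mul_norm (𝕜 := ℂ), hxx]
      simp
    have h6 : (‖x‖ - 1) * (‖x‖ + 1) = 0 := by nlinarith
    rcases mul_eq_zero.mp h6 with h | h
    · linarith
    · nlinarith [norm_nonneg x]
  have hterm : ∀ j ∈ Finset.range (N + 1),
      (x : ℤ → ℂ) ((j : ℤ) + n + 1) + b ((j : ℤ) + n - 1) * (x : ℤ → ℂ) ((j : ℤ) + n - 1)
        = if j + 1 ≤ N then w (j + 1) else 0 := by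
    intro j hj
    have hjN : j ≤ N := by have := Finset.mem_range.mp hj; omega
    have hb0 : b ((j : ℤ) + n - 1) * (x : ℤ → ℂ) ((j : ℤ) + n - 1) = 0 := by
      rcases Nat.eq_zero_or_pos j with h0 | hpos
      · subst h0
        have hxz : (x : ℤ → ℂ) (((0 : ℕ) : ℤ) + n - 1) = 0 := by
          apply hx_zero
          intro j' hj'
          have : (0 : ℤ) ≤ (j' : ℤ) := Int.ofNat_nonneg j'
          omega
        rw [hxz, mul_zero]
      · have hcast : (j : ℤ) + n - 1 = ((j - 1 : ℕ) : ℤ) + n := by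
          have : ((j - 1 : ℕ) : ℤ) = (j : ℤ) - 1 := by
            rw [Nat.cast_sub hpos]; norm_num
          rw [this]; ring
        rw [hcast, hn (j - 1) (by omega), zero_mul]
    rw [hb0, add_zero]
    by_cases hlt : j + 1 ≤ N
    · have hcast : (j : ℤ) + n + 1 = ((j + 1 : ℕ) : ℤ) + n := by push_cast; ring
      rw [hcast, hx_at (j + 1) hlt, if_pos hlt]
    · rw [if_neg hlt]
      apply hx_zero
      intro j' hj'
      have h1 : (0 : ℤ) ≤ (j' : ℤ) := Int.ofNat_nonneg j'
      have h2 : (j' : ℤ) ≤ (N : ℤ) := by exact_mod_cast hj'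
      have h3 : (j : ℤ) = (N : ℤ) := by
        have h4 : j = N := by omega
        exact_mod_cast h4
      omega
  have hzval : (inner (𝕜 := ℂ) x (Ab x) : ℂ) = z := by
    rw [hswap (Ab x)]
    have h1 : ∀ j ∈ Finset.range (N + 1), conj (w j) * (Ab x : ℤ → ℂ) ((j : ℤ) + n)
        = if j + 1 ≤ N then ((a j * a (j + 1) : ℝ) : ℂ) * u else 0 := by
      intro j hj
      rw [hAb x ((j : ℤ) + n), hterm j hj]
      by_cases hlt : j + 1 ≤ N
      · rw [if_pos hlt, if_pos hlt, hwdef]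
        simp only []
        push_cast
        calc conj ((a j : ℂ) * u ^ j) * ((a (j + 1) : ℂ) * u ^ (j + 1))
            = (a j : ℂ) * (a (j + 1) : ℂ) * ((conj u * u) ^ j * u) := by
              rw [map_mul, map_pow, Complex.conj_ofReal]; ring
          _ = (a j : ℂ) * (a (j + 1) : ℂ) * u := by rw [hu1, one_pow, one_mul]
      · rw [if_neg hlt, if_neg hlt, mul_zero]
    rw [Finset.sum_congr rfl h1, Finset.sum_range_succ, if_neg (by omega), add_zero]
    have h2 : ∀ j ∈ Finset.range N,
        (if j + 1 ≤ N then ((a j * a (j + 1) : ℝ) : ℂ) * u else 0)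
          = ((a j * a (j + 1) : ℝ) : ℂ) * u :=
      fun j hj => if_pos (Finset.mem_range.mp hj)
    rw [Finset.sum_congr rfl h2, ← Finset.sum_mul, ← Complex.ofReal_sum, har, huz]
  exact ⟨x, hnorm, hzval⟩
end
end

section
/- Let b = (b_i)_{i∈ℤ} be a biinfinite sequence with every b_i ∈ {0,1}. If the constant sequence 𝟏 belongs to the closure of the shift orbit of b (in the product topology on {0,1}^ℤ), then the set {z ∈ ℂ : Im z = 0 and −2 < Re z < 2} is contained in W(A_b). -/
open scoped ComplexConjugate ENNReal
open Filter

noncomputable section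

open Real in
lemma trig_key (θ : ℝ) (m : ℕ) :
    2 * ∑ k ∈ Finset.range m, Real.sin (((k:ℝ)+1)*θ) * Real.sin (((k:ℝ)+2)*θ)
    = 2 * Real.cos θ * ∑ k ∈ Finset.range (m+1), Real.sin (((k:ℝ)+1)*θ)^2
      - Real.sin (((m:ℝ)+1)*θ) * Real.sin (((m:ℝ)+2)*θ) := by
  induction m with
  | zero =>
      simp only [Finset.range_zero, Finset.sum_empty, zero_add, Finset.range_one,
        Finset.sum_singleton, Nat.cast_zero]
      rw [show ((2:ℝ))*θ = θ+θ by ring, Real.sin_add, one_mul]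
      ring
  | succ n ih =>
      rw [Finset.sum_range_succ, Finset.sum_range_succ (n := n+1)]
      push_cast at ih ⊢
      rw [show ((n:ℝ)+1+1) = (n:ℝ)+2 by ring, show ((n:ℝ)+1+2) = (n:ℝ)+3 by ring]
      have key : Real.sin (((n:ℝ)+1)*θ) + Real.sin (((n:ℝ)+3)*θ)
          = 2 * Real.cos θ * Real.sin (((n:ℝ)+2)*θ) := by
        have h1 := Real.sin_add (((n:ℝ)+2)*θ) θ
        have h2 := Real.sin_sub (((n:ℝ)+2)*θ) θ
        rw [show ((n:ℝ)+2)*θ + θ = ((n:ℝ)+3)*θ by ring] at h1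
        rw [show ((n:ℝ)+2)*θ - θ = ((n:ℝ)+1)*θ by ring] at h2
        linarith
      linear_combination ih + Real.sin (((n:ℝ)+2)*θ) * key

open Real in
lemma exists_fin (t : ℝ) (ht1 : -2 < t) (ht2 : t < 2) :
    ∃ (m : ℕ) (v : ℕ → ℝ), (∑ k ∈ Finset.range (m+1), v k ^ 2 = 1) ∧
      2 * ∑ k ∈ Finset.range m, v k * v (k+1) = t := by
  -- choose m with |t| < 2 cos (π/(m+2))
  obtain ⟨m, hm⟩ : ∃ m : ℕ, |t| < 2 * Real.cos (π / ((m:ℝ) + 2)) := by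
    have hlim : Filter.Tendsto (fun m : ℕ => 2 * Real.cos (π / ((m:ℝ) + 2)))
        Filter.atTop (nhds 2) := by
      have h1 : Filter.Tendsto (fun m : ℕ => π / ((m:ℝ) + 2)) Filter.atTop (nhds 0) := by
        apply Filter.Tendsto.div_atTop tendsto_const_nhds
        exact Filter.tendsto_atTop_add_const_right _ 2 tendsto_natCast_atTop_atTop
      have := (Real.continuous_cos.tendsto 0).comp h1
      rw [Real.cos_zero] at this
      simpa using (this.const_mul 2)
    have habs : |t| < 2 := abs_lt.mpr ⟨ht1, ht2⟩
    exact ((hlim.eventually (eventually_gt_nhds habs)).exists)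
  set θ₁ : ℝ := π / ((m:ℝ) + 2) with hθ₁
  have hm2 : (0:ℝ) < (m:ℝ) + 2 := by positivity
  have hθ₁pos : 0 < θ₁ := div_pos Real.pi_pos hm2
  have hθ₁le : θ₁ ≤ π / 2 := by
    rw [hθ₁, div_le_div_iff₀ hm2 two_pos]
    nlinarith [Real.pi_pos, Nat.cast_nonneg (α := ℝ) m]
  have hθ₁lt : θ₁ < π := by linarith [Real.pi_pos]
  set θ₂ : ℝ := π - θ₁ with hθ₂
  have hθ₁₂ : θ₁ ≤ θ₂ := by rw [hθ₂]; linarith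
  set N : ℝ → ℝ := fun θ => ∑ k ∈ Finset.range (m+1), Real.sin (((k:ℝ)+1)*θ)^2 with hN
  have hNpos : ∀ θ, 0 < θ → θ < π → 0 < N θ := by
    intro θ h1 h2
    have hsin : Real.sin θ > 0 := Real.sin_pos_of_pos_of_lt_pi h1 h2
    have hterm : 0 < Real.sin ((((0:ℕ):ℝ)+1)*θ)^2 := by
      rw [show (((0:ℕ):ℝ)+1)*θ = θ by push_cast; ring]
      positivity
    refine lt_of_lt_of_le hterm ?_
    exact Finset.single_le_sum (s := Finset.range (m+1)) (f := fun k : ℕ => Real.sin (((k:ℝ)+1)*θ)^2)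
      (fun i _ => sq_nonneg _) (by simp : (0:ℕ) ∈ Finset.range (m+1))
  -- IVT part
  have hNc : Continuous N := by
    apply continuous_finset_sum
    intro i _
    exact (Real.continuous_sin.comp (continuous_const.mul continuous_id)).pow 2
  set h : ℝ → ℝ := fun θ => 2 * Real.cos θ * N θ
      - Real.sin (((m:ℝ)+1)*θ) * Real.sin (((m:ℝ)+2)*θ) - t * N θ with hh
  have hc : Continuous h := by
    apply Continuous.sub
    · apply Continuous.sub
      · exact (continuous_const.mul Real.continuous_cos).mul hNc
      · exact ((Real.continuous_sin.comp (continuous_const.mul continuous_id)).mul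
          (Real.continuous_sin.comp (continuous_const.mul continuous_id)))
    · exact continuous_const.mul hNc
  have hθ₂pos : 0 < θ₂ := by rw [hθ₂]; linarith
  have hθ₂lt : θ₂ < π := by rw [hθ₂]; linarith
  have hs1 : Real.sin (((m:ℝ)+2)*θ₁) = 0 := by
    rw [hθ₁, show ((m:ℝ)+2) * (π / ((m:ℝ)+2)) = π by field_simp]
    exact Real.sin_pi
  have hs2 : Real.sin (((m:ℝ)+2)*θ₂) = 0 := by
    rw [hθ₂, hθ₁, show ((m:ℝ)+2) * (π - π / ((m:ℝ)+2)) = (((m+1:ℕ)):ℝ) * π by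
      push_cast; field_simp; ring]
    exact Real.sin_nat_mul_pi (m+1)
  have hcos2 : Real.cos θ₂ = - Real.cos θ₁ := by rw [hθ₂]; exact Real.cos_pi_sub θ₁
  have habs1 : t < 2 * Real.cos θ₁ := lt_of_le_of_lt (le_abs_self t) hm
  have habs2 : -(2 * Real.cos θ₁) < t := by
    have := neg_abs_le t
    linarith
  have hpos : 0 < h θ₁ := by
    rw [hh]
    simp only [hs1, mul_zero, sub_zero]
    have := hNpos θ₁ hθ₁pos hθ₁lt
    nlinarith
  have hneg : h θ₂ < 0 := by
    rw [hh]
    simp only [hs2, mul_zero, sub_zero, hcos2]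
    have := hNpos θ₂ hθ₂pos hθ₂lt
    nlinarith
  obtain ⟨θ, hθmem, hθ0⟩ := intermediate_value_Icc' hθ₁₂ hc.continuousOn
    (Set.mem_Icc.mpr ⟨hneg.le, hpos.le⟩)
  have hθpos : 0 < θ := lt_of_lt_of_le hθ₁pos hθmem.1
  have hθlt : θ < π := lt_of_le_of_lt hθmem.2 hθ₂lt
  have hNθ : 0 < N θ := hNpos θ hθpos hθlt
  have h0' : 2 * Real.cos θ * N θ
      - Real.sin (((m:ℝ)+1)*θ) * Real.sin (((m:ℝ)+2)*θ) = t * N θ := by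
    have h2 := hθ0
    simp only [hh] at h2
    linarith
  have hkey : 2 * ∑ k ∈ Finset.range m, Real.sin (((k:ℝ)+1)*θ) * Real.sin (((k:ℝ)+2)*θ)
      = t * N θ := by
    rw [trig_key θ m]
    exact h0'
  refine ⟨m, fun k => Real.sin (((k:ℝ)+1)*θ) / Real.sqrt (N θ), ?_, ?_⟩
  · beta_reduce
    have e : ∑ k ∈ Finset.range (m+1), (Real.sin (((k:ℝ)+1)*θ) / Real.sqrt (N θ))^2
        = (∑ k ∈ Finset.range (m+1), Real.sin (((k:ℝ)+1)*θ)^2) / (N θ) := by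
      rw [Finset.sum_div]
      refine Finset.sum_congr rfl fun k _ => ?_
      rw [div_pow, Real.sq_sqrt hNθ.le]
    rw [e]
    exact div_self (ne_of_gt hNθ)
  · beta_reduce
    have e : ∑ k ∈ Finset.range m, Real.sin (((k:ℝ)+1)*θ) / Real.sqrt (N θ)
        * (Real.sin ((((k+1:ℕ):ℝ)+1)*θ) / Real.sqrt (N θ))
        = ∑ k ∈ Finset.range m,
            Real.sin (((k:ℝ)+1)*θ) * Real.sin (((k:ℝ)+2)*θ) / N θ := by
      refine Finset.sum_congr rfl fun k _ => ?_
      rw [div_mul_div_comm, Real.mul_self_sqrt hNθ.le]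
      push_cast
      rw [show ((k:ℝ)+1+1) = (k:ℝ)+2 by ring]
    rw [e, ← Finset.sum_div, ← mul_div_assoc, hkey]
    exact mul_div_cancel_right₀ t (ne_of_gt hNθ)

/-- If the constant sequence `𝟏` lies in the closure of the shift orbit of the
`{0,1}`-valued sequence `b`, then the open interval `(-2,2) ⊆ ℝ ⊆ ℂ` is contained
in `W(A_b)`. -/
theorem stmt6 (b : ℤ → ℂ) (hb : ∀ i, b i = 0 ∨ b i = 1)
    (Ab : Hseq →L[ℂ] Hseq) (hAb : IsTridiag b Ab)
    (h1 : (fun _ : ℤ => (1 : ℂ)) ∈ closure (shiftOrbit b)) :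
    {z : ℂ | z.im = 0 ∧ -2 < z.re ∧ z.re < 2} ⊆ numRange Ab := by
  rintro z ⟨him, ht1, ht2⟩
  obtain ⟨m, v, hv1, hv2⟩ := exists_fin z.re ht1 ht2
  obtain ⟨n, hwin⟩ : ∃ n : ℤ, ∀ i : ℤ, 1 ≤ i → i ≤ (m:ℤ) → b (i + n) = 1 := by
    have hSfin : (Set.Icc (1:ℤ) (m:ℤ)).Finite := Set.finite_Icc _ _
    have hUopen : IsOpen ((Set.Icc (1:ℤ) (m:ℤ)).pi fun _ => Metric.ball (1:ℂ) (1/2)) :=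
      isOpen_set_pi hSfin fun _ _ => Metric.isOpen_ball
    have hmem : (fun _ : ℤ => (1:ℂ)) ∈
        (Set.Icc (1:ℤ) (m:ℤ)).pi (fun _ => Metric.ball (1:ℂ) (1/2)) := by
      intro i _
      simp [Metric.mem_ball]
    obtain ⟨c, hcU, hcS⟩ := _root_.mem_closure_iff.mp h1 _ hUopen hmem
    obtain ⟨n, rfl⟩ := hcS
    refine ⟨n, fun i hi1 hi2 => ?_⟩
    have hball := hcU i (Set.mem_Icc.mpr ⟨hi1, hi2⟩)
    rcases hb (i + n) with h0 | hone
    · exfalso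
      simp only [Metric.mem_ball] at hball
      rw [h0] at hball
      norm_num [Complex.dist_eq] at hball
    · exact hone
  set x : Hseq := ∑ k ∈ Finset.range (m+1), lp.single 2 (n + 1 + (k:ℤ)) ((v k : ℂ)) with hx
  have hcoord : ∀ j : ℤ, (x : ℤ → ℂ) j
      = ∑ k ∈ Finset.range (m+1), (if n + 1 + (k:ℤ) = j then (v k : ℂ) else 0) := by
    intro j
    rw [hx, lp.coeFn_sum, Finset.sum_apply]
    refine Finset.sum_congr rfl fun k _ => ?_
    by_cases h : j = n + 1 + (k:ℤ)
    · subst h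
      rw [lp.single_apply_self, if_pos rfl]
    · rw [lp.single_apply_ne _ _ _ h, if_neg fun hh => h hh.symm]
  have hval : ∀ k : ℕ, k < m+1 → (x : ℤ → ℂ) (n + 1 + (k:ℤ)) = (v k : ℂ) := by
    intro k0 hk0
    rw [hcoord]
    rw [Finset.sum_eq_single k0]
    · rw [if_pos rfl]
    · intro k hk hne
      exact if_neg (fun hh => hne (by omega))
    · intro h
      exact absurd (Finset.mem_range.mpr hk0) h
  have hzero : ∀ j : ℤ, (j < n + 1 ∨ n + 1 + (m:ℤ) < j) → (x : ℤ → ℂ) j = 0 := by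
    intro j hj
    rw [hcoord]
    apply Finset.sum_eq_zero
    intro k hk
    have hk' := Finset.mem_range.mp hk
    exact if_neg (by omega)
  have hinner : ∀ y : Hseq, (inner (𝕜 := ℂ) x y : ℂ)
      = ∑ k ∈ Finset.range (m+1), (v k : ℂ) * (y : ℤ → ℂ) (n + 1 + (k:ℤ)) := by
    intro y
    rw [hx, sum_inner]
    refine Finset.sum_congr rfl fun k _ => ?_
    rw [lp.inner_single_left]
    simp [RCLike.inner_apply, Complex.conj_ofReal]
    ring
  have hxx : (inner (𝕜 := ℂ) x x : ℂ) = 1 := by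
    rw [hinner x]
    have e : ∀ k ∈ Finset.range (m+1),
        (v k : ℂ) * (x : ℤ → ℂ) (n + 1 + (k:ℤ)) = ((v k ^ 2 : ℝ) : ℂ) := by
      intro k hk
      rw [hval k (Finset.mem_range.mp hk)]
      push_cast
      ring
    rw [Finset.sum_congr rfl e, ← Complex.ofReal_sum, hv1, Complex.ofReal_one]
  have hnorm : ‖x‖ = 1 := by
    have h2 := inner_self_eq_norm_sq (𝕜 := ℂ) x
    rw [hxx] at h2
    norm_num at h2
    nlinarith [norm_nonneg x]
  refine ⟨x, hnorm, ?_⟩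
  have hAx : (inner (𝕜 := ℂ) x (Ab x) : ℂ) = ((z.re : ℝ) : ℂ) := by
    rw [hinner (Ab x)]
    have e : ∀ k ∈ Finset.range (m+1),
        (v k : ℂ) * (Ab x : ℤ → ℂ) (n + 1 + (k:ℤ))
        = (v k : ℂ) * (x : ℤ → ℂ) (n + 1 + (k:ℤ) + 1)
          + (v k : ℂ) * (b (n + 1 + (k:ℤ) - 1) * (x : ℤ → ℂ) (n + 1 + (k:ℤ) - 1)) := by
      intro k _
      rw [hAb x]
      ring
    rw [Finset.sum_congr rfl e, Finset.sum_add_distrib]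
    have e1 : ∑ k ∈ Finset.range (m+1), (v k : ℂ) * (x : ℤ → ℂ) (n + 1 + (k:ℤ) + 1)
        = ∑ k ∈ Finset.range m, ((v k : ℂ) * (v (k+1) : ℂ)) := by
      rw [Finset.sum_range_succ]
      rw [hzero (n + 1 + (m:ℤ) + 1) (Or.inr (by omega)), mul_zero, add_zero]
      refine Finset.sum_congr rfl fun k hk => ?_
      have hk' := Finset.mem_range.mp hk
      have hcast : n + 1 + (k:ℤ) + 1 = n + 1 + ((k+1 : ℕ) : ℤ) := by push_cast; ring
      rw [hcast, hval (k+1) (by omega)]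
    have e2 : ∑ k ∈ Finset.range (m+1),
        (v k : ℂ) * (b (n + 1 + (k:ℤ) - 1) * (x : ℤ → ℂ) (n + 1 + (k:ℤ) - 1))
        = ∑ k ∈ Finset.range m, ((v k : ℂ) * (v (k+1) : ℂ)) := by
      rw [Finset.sum_range_succ']
      have h00 : (x : ℤ → ℂ) (n + 1 + ((0:ℕ):ℤ) - 1) = 0 := by
        apply hzero
        left
        omega
      rw [h00, mul_zero, mul_zero, add_zero]
      refine Finset.sum_congr rfl fun k hk => ?_
      have hk' := Finset.mem_range.mp hk
      have hb1 : b (n + 1 + ((k+1:ℕ):ℤ) - 1) = 1 := by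
        have hcast : n + 1 + ((k+1:ℕ):ℤ) - 1 = ((k+1:ℕ):ℤ) + n := by push_cast; ring
        rw [hcast]
        exact hwin _ (by omega) (by omega)
      have hxk : (x : ℤ → ℂ) (n + 1 + ((k+1:ℕ):ℤ) - 1) = (v k : ℂ) := by
        have hcast : n + 1 + ((k+1:ℕ):ℤ) - 1 = n + 1 + (k:ℤ) := by push_cast; ring
        rw [hcast, hval k (by omega)]
      rw [hb1, hxk, one_mul]
      ring
    rw [e1, e2]
    have efin : ∑ k ∈ Finset.range m, ((v k : ℂ) * (v (k+1) : ℂ))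
        + ∑ k ∈ Finset.range m, ((v k : ℂ) * (v (k+1) : ℂ))
        = ((2 * ∑ k ∈ Finset.range m, v k * v (k+1) : ℝ) : ℂ) := by
      push_cast
      ring
    rw [efin, hv2]
  rw [hAx]
  exact Complex.ext (by simp) (by simp [him])
end
end

section
/- Let b = (b_i)_{i∈ℤ} be a biinfinite sequence with every b_i ∈ {0,1}. If both constant sequences 𝟎 and 𝟏 belong to X_b, the closure of the shift orbit of b, then W(A_b) = conv(W(A_𝟎) ∪ W(A_𝟏)). -/
open scoped ComplexConjugate ENNReal
open Filter

noncomputable section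

namespace Stmt7

/-- squares of coefficients are summable -/
lemma sq_summable (x : Hseq) : Summable (fun j : ℤ => ‖(x : ℤ → ℂ) j‖^2) := by
  have h2 := (lp.memℓp x).summable (p := 2) (by norm_num)
  simpa [Real.rpow_natCast] using h2

lemma sq_summable_shift (x : Hseq) (k : ℤ) :
    Summable (fun j : ℤ => ‖(x : ℤ → ℂ) (j + k)‖^2) := by
  have := (sq_summable x).comp_injective (add_left_injective k)
  simpa [Function.comp_def] using this

lemma prod_summable (x : Hseq) (k l : ℤ) :
    Summable (fun j : ℤ => ‖(x : ℤ → ℂ) (j + k)‖ * ‖(x : ℤ → ℂ) (j + l)‖) := by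
  refine Summable.of_nonneg_of_le (fun j => by positivity)
    (fun j => ?_) (((sq_summable_shift x k).add (sq_summable_shift x l)).div_const 2)
  have := two_mul_le_add_sq ‖(x : ℤ → ℂ) (j + k)‖ ‖(x : ℤ → ℂ) (j + l)‖
  simp only [Pi.add_apply]
  nlinarith [this]

lemma prod_summable01 (x : Hseq) :
    Summable (fun j : ℤ => ‖(x : ℤ → ℂ) j‖ * ‖(x : ℤ → ℂ) (j + 1)‖) := by
  have := prod_summable x 0 1
  simpa using this

lemma term1_summable (x : Hseq) :
    Summable (fun j : ℤ => conj ((x : ℤ → ℂ) j) * (x : ℤ → ℂ) (j + 1)) := by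
  refine Summable.of_norm ?_
  have := prod_summable01 x
  simpa [norm_mul] using this

lemma term2_summable (c : ℤ → ℂ) (hc : ∀ i, ‖c i‖ ≤ 1) (x : Hseq) :
    Summable (fun j : ℤ => c (j - 1) * (conj ((x : ℤ → ℂ) j) * (x : ℤ → ℂ) (j - 1))) := by
  have hs : Summable (fun j : ℤ => ‖(x : ℤ → ℂ) j‖ * ‖(x : ℤ → ℂ) (j - 1)‖) := by
    simpa [sub_eq_add_neg] using prod_summable x 0 (-1)
  refine Summable.of_norm (Summable.of_nonneg_of_le (fun j => norm_nonneg _) (fun j => ?_) hs)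
  rw [norm_mul, norm_mul, RCLike.norm_conj]
  calc ‖c (j-1)‖ * (‖(x : ℤ → ℂ) j‖ * ‖(x : ℤ → ℂ) (j-1)‖)
      ≤ 1 * (‖(x : ℤ → ℂ) j‖ * ‖(x : ℤ → ℂ) (j-1)‖) := by
        apply mul_le_mul_of_nonneg_right (hc _) (by positivity)
    _ = _ := one_mul _

lemma inner_tridiag (c : ℤ → ℂ) (hc : ∀ i, ‖c i‖ ≤ 1) (A : Hseq →L[ℂ] Hseq)
    (hA : IsTridiag c A) (x : Hseq) :
    (inner (𝕜 := ℂ) x (A x) : ℂ)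
      = (∑' j : ℤ, conj ((x : ℤ → ℂ) j) * (x : ℤ → ℂ) (j + 1))
        + ∑' j : ℤ, c j * (conj ((x : ℤ → ℂ) (j + 1)) * (x : ℤ → ℂ) j) := by
  rw [lp.inner_eq_tsum]
  have h1 : ∀ j : ℤ, (inner (𝕜 := ℂ) ((x : ℤ → ℂ) j) ((A x : ℤ → ℂ) j) : ℂ)
      = conj ((x : ℤ → ℂ) j) * (x : ℤ → ℂ) (j+1)
        + c (j-1) * (conj ((x : ℤ → ℂ) j) * (x : ℤ → ℂ) (j-1)) := by
    intro j
    rw [hA x j, RCLike.inner_apply]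
    ring
  rw [tsum_congr h1, Summable.tsum_add (term1_summable x) (term2_summable c hc x)]
  congr 1
  rw [← (Equiv.addRight (1:ℤ)).tsum_eq
    (fun j => c (j - 1) * (conj ((x : ℤ → ℂ) j) * (x : ℤ → ℂ) (j - 1)))]
  exact tsum_congr fun j => by simp

lemma sum_sq_eq_one (x : Hseq) (hx : ‖x‖ = 1) : ∑' j : ℤ, ‖(x : ℤ → ℂ) j‖^2 = 1 := by
  have h := lp.norm_rpow_eq_tsum (p := 2) (by norm_num) x
  rw [hx] at h
  simpa [Real.rpow_natCast] using h.symm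

lemma sum_sq_shift (x : Hseq) (hx : ‖x‖ = 1) :
    ∑' j : ℤ, ‖(x : ℤ → ℂ) (j + 1)‖^2 = 1 := by
  rw [← sum_sq_eq_one x hx]
  exact (Equiv.addRight (1:ℤ)).tsum_eq (fun j => ‖(x : ℤ → ℂ) j‖^2)

lemma S_lt_one (x : Hseq) (hx : ‖x‖ = 1) :
    ∑' j : ℤ, ‖(x : ℤ → ℂ) j‖ * ‖(x : ℤ → ℂ) (j + 1)‖ < 1 := by
  set a : ℤ → ℝ := fun j => ‖(x : ℤ → ℂ) j‖ with ha
  have h2 : Summable fun j => a j ^ 2 := sq_summable x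
  have h2' : Summable fun j => a (j+1) ^ 2 := sq_summable_shift x 1
  have hS : Summable fun j => a j * a (j+1) := prod_summable01 x
  have hd : Summable fun j => (a j - a (j+1))^2 := by
    have heq : (fun j => (a j - a (j+1))^2)
        = fun j => (a j^2 + a (j+1)^2) - 2*(a j * a (j+1)) := funext fun j => by ring
    rw [heq]; exact (h2.add h2').sub (hS.mul_left 2)
  have key : ∑' j, (a j - a (j+1))^2 = 2 - 2 * ∑' j, a j * a (j+1) := by
    calc ∑' j, (a j - a (j+1))^2
        = ∑' j, ((a j^2 + a (j+1)^2) - 2*(a j*a (j+1))) := tsum_congr fun j => by ring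
      _ = (∑' j, (a j^2 + a (j+1)^2)) - ∑' j, 2*(a j*a (j+1)) :=
          Summable.tsum_sub (h2.add h2') (hS.mul_left 2)
      _ = ((∑' j, a j^2) + ∑' j, a (j+1)^2) - 2 * ∑' j, (a j*a (j+1)) := by
          rw [Summable.tsum_add h2 h2', tsum_mul_left]
      _ = 2 - 2 * ∑' j, a j * a (j+1) := by
          rw [sum_sq_eq_one x hx, sum_sq_shift x hx]; ring
  have hne : ∃ j, a j ≠ a (j+1) := by
    by_contra h
    push_neg at h
    have hconst : ∀ j : ℤ, a j = a 0 := by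
      intro j
      induction j using Int.induction_on with
      | zero => rfl
      | succ n ih => rw [← h n, ih]
      | pred n ih =>
          rw [h (-(n:ℤ)-1), show (-(n:ℤ)-1) + 1 = -(n:ℤ) by ring]
          exact ih
    have hsum0 : Summable (fun _ : ℤ => a 0 ^ 2) := by
      have h2c := h2
      simp only [hconst] at h2c
      exact h2c
    have hfin : ¬ (0 < a 0 ^ 2) := fun hpos =>
      (not_finite_iff_infinite.mpr inferInstance) (Finite.of_summable_const hpos hsum0)
    have ha0 : a 0 ^ 2 = 0 := le_antisymm (not_lt.mp hfin) (sq_nonneg _)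
    have h1 : ∑' j : ℤ, a j ^ 2 = 1 := sum_sq_eq_one x hx
    have h0 : ∑' j : ℤ, a j ^ 2 = 0 := by
      have heq : (fun j : ℤ => a j ^ 2) = fun _ => (0:ℝ) := funext fun j => by
        rw [hconst j, ha0]
      rw [heq, tsum_zero]
    rw [h1] at h0
    exact one_ne_zero h0
  obtain ⟨j0, hj0⟩ := hne
  have hpos : 0 < ∑' j, (a j - a (j+1))^2 :=
    Summable.tsum_pos hd (fun j => sq_nonneg _) j0 (pow_two_pos_of_ne_zero (sub_ne_zero.mpr hj0))
  have : ∑' j, a j * a (j+1) < 1 := by linarith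
  exact this

/-- numerator polynomial -/
def Pp (t : ℝ) (n : ℕ) : ℝ := ∑ j ∈ Finset.range (n-1), t^(2*j+1)

/-- denominator polynomial -/
def Qq (t : ℝ) (n : ℕ) : ℝ := ∑ j ∈ Finset.range n, t^(2*j)

lemma Qq_pos (t : ℝ) (n : ℕ) (hn : 1 ≤ n) : 0 < Qq t n := by
  have h1 : (1:ℝ) ≤ Qq t n := by
    have := Finset.single_le_sum (f := fun j => t^(2*j))
      (fun j _ => (even_two_mul j).pow_nonneg t) (Finset.mem_range.mpr hn)
    simpa [Qq] using this
  linarith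

lemma exists_t (s : ℝ) (h0 : 0 ≤ s) (h1 : s < 1) :
    ∃ n : ℕ, 1 ≤ n ∧ ∃ t : ℝ, 0 ≤ t ∧ t ≤ 1 ∧ Pp t n = s * Qq t n := by
  obtain ⟨n, hn⟩ := exists_nat_gt (1 / (1 - s))
  have hs1 : 0 < 1 - s := by linarith
  have hinv : (1:ℝ) ≤ 1 / (1 - s) := by
    rw [le_div_iff₀ hs1]; linarith
  have hn1 : 1 ≤ n := by
    by_contra h
    push_neg at h
    interval_cases n <;> simp_all <;> linarith
  refine ⟨n, hn1, ?_⟩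
  set g : ℝ → ℝ := fun t => Pp t n - s * Qq t n with hg
  have hcont : ContinuousOn g (Set.Icc 0 1) := by
    apply Continuous.continuousOn
    unfold g
    unfold Pp Qq
    exact ((continuous_finset_sum _ fun j _ => continuous_pow _).sub
      (continuous_const.mul (continuous_finset_sum _ fun j _ => continuous_pow _)))
  have hg0 : g 0 = -s := by
    have hP : Pp 0 n = 0 := by
      unfold Pp
      apply Finset.sum_eq_zero
      intro j _
      exact zero_pow (by omega)
    have hQ : Qq 0 n = 1 := by
      unfold Qq
      rw [Finset.sum_eq_single_of_mem 0 (Finset.mem_range.mpr hn1)]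
      · norm_num
      · intro j _ hj
        exact zero_pow (by omega)
    simp [hg, hP, hQ]
  have hg1 : 0 ≤ g 1 := by
    have hP : Pp 1 n = (n:ℝ) - 1 := by
      unfold Pp
      simp only [one_pow, Finset.sum_const, Finset.card_range, nsmul_eq_mul, mul_one]
      rw [Nat.cast_sub hn1]; norm_num
    have hQ : Qq 1 n = (n:ℝ) := by
      unfold Qq
      simp
    have hkey : 1 < (n:ℝ) * (1 - s) := by
      rw [div_lt_iff₀ hs1] at hn
      linarith
    simp only [hg, hP, hQ]
    nlinarith
  have := intermediate_value_Icc (le_of_lt zero_lt_one) hcont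
  have h0mem : (0:ℝ) ∈ Set.Icc (g 0) (g 1) := by
    constructor
    · rw [hg0]; linarith
    · exact hg1
  obtain ⟨t, ht, hgt⟩ := this h0mem
  refine ⟨t, ht.1, ht.2, ?_⟩
  have hgt' : Pp t n - s * Qq t n = 0 := hgt
  linarith

/-- the geometric block vector -/
def blockFun (m : ℤ) (n : ℕ) (ω : ℂ) (t : ℝ) : ℤ → ℂ :=
  fun i => if m ≤ i ∧ i < m + n then ω^(i-m).toNat * (t:ℂ)^(i-m).toNat else 0

lemma blockFun_eq_zero {m : ℤ} {n : ℕ} {ω : ℂ} {t : ℝ} {i : ℤ}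
    (h : ¬(m ≤ i ∧ i < m + n)) : blockFun m n ω t i = 0 := by
  simp [blockFun, h]

lemma blockFun_apply (m : ℤ) (n : ℕ) (ω : ℂ) (t : ℝ) (j : ℕ) (hj : j < n) :
    blockFun m n ω t (m + j) = ω^j * (t:ℂ)^j := by
  have h : m ≤ m + (j:ℤ) ∧ m + (j:ℤ) < m + n := by omega
  simp [blockFun, h]

lemma blockFun_memℓp (m : ℤ) (n : ℕ) (ω : ℂ) (t : ℝ) :
    Memℓp (blockFun m n ω t) 2 := by
  apply memℓp_gen
  apply summable_of_ne_finset_zero (s := Finset.Icc m (m + n - 1))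
  intro i hi
  have : ¬(m ≤ i ∧ i < m + n) := by
    simp only [Finset.mem_Icc] at hi
    omega
  rw [blockFun_eq_zero this]
  simp

lemma conj_mul_self_eq_one {ω : ℂ} (hω : ‖ω‖ = 1) : conj ω * ω = 1 := by
  have h : Complex.normSq ω = 1 := by
    rw [← Complex.sq_norm, hω]; norm_num
  rw [mul_comm, Complex.mul_conj, h]
  norm_num

lemma realize (c : ℤ → ℂ) (A : Hseq →L[ℂ] Hseq) (hA : IsTridiag c A) (γ : ℂ)
    (m : ℤ) (n : ℕ) (hn : 1 ≤ n)
    (hblock : ∀ j : ℕ, j + 1 < n → c (m + j) = γ)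
    (ω : ℂ) (hω : ‖ω‖ = 1) (t : ℝ) :
    ∃ x : Hseq, ‖x‖ = 1 ∧ (∀ i : ℤ, (x : ℤ → ℂ) i ≠ 0 → m ≤ i ∧ i < m + n) ∧
      (inner (𝕜 := ℂ) x (A x) : ℂ) = (ω + γ * conj ω) * ((Pp t n / Qq t n : ℝ) : ℂ) := by
  obtain ⟨k, rfl⟩ : ∃ k, n = k + 1 := ⟨n - 1, by omega⟩
  have hωω : conj ω * ω = 1 := conj_mul_self_eq_one hω
  set f : ℤ → ℂ := blockFun m (k+1) ω t with hf
  set u : Hseq := (⟨f, blockFun_memℓp m (k+1) ω t⟩ : Hseq) with hu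
  have hcoe : ∀ i, (u : ℤ → ℂ) i = f i := fun i => rfl
  have hfz : ∀ i : ℤ, ¬(m ≤ i ∧ i < m + ((k+1:ℕ):ℤ)) → f i = 0 := fun i hi =>
    blockFun_eq_zero hi
  have hfap : ∀ j : ℕ, j < k + 1 → f (m + (j:ℤ)) = ω^j * (t:ℂ)^j := fun j hj =>
    blockFun_apply m (k+1) ω t j hj
  have hmap : ∀ F : ℤ → ℂ, (∀ i : ℤ, ¬(m ≤ i ∧ i < m + ((k+1:ℕ):ℤ)) → F i = 0) →
      ∑' i : ℤ, F i = ∑ j ∈ Finset.range (k+1), F (m + (j:ℤ)) := by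
    intro F hF
    rw [tsum_eq_sum (s := Finset.Icc m (m + ((k+1:ℕ):ℤ) - 1))
      (fun i hi => hF i (by simp only [Finset.mem_Icc] at hi; omega))]
    rw [show Finset.Icc m (m + ((k+1:ℕ):ℤ) - 1)
        = (Finset.range (k+1)).map ⟨fun j : ℕ => m + (j:ℤ), fun a b h => by simpa using h⟩ from ?_]
    · rw [Finset.sum_map]
      rfl
    · ext i
      simp only [Finset.mem_Icc, Finset.mem_map, Finset.mem_range,
        Function.Embedding.coeFn_mk]
      constructor
      · intro hi
        exact ⟨(i - m).toNat, by omega, by show m + ((i - m).toNat : ℤ) = i; omega⟩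
      · rintro ⟨j, hj, rfl⟩
        show m ≤ m + (j:ℤ) ∧ m + (j:ℤ) ≤ m + ((k+1:ℕ):ℤ) - 1; omega
  have hQpos : 0 < Qq t (k+1) := Qq_pos t (k+1) (by omega)
  -- inner u u
  have hQc : (inner (𝕜 := ℂ) u u : ℂ) = ((Qq t (k+1) : ℝ) : ℂ) := by
    rw [lp.inner_eq_tsum]
    have h1 : ∀ i, (inner (𝕜 := ℂ) ((u : ℤ → ℂ) i) ((u : ℤ → ℂ) i) : ℂ) = conj (f i) * f i :=
      fun i => by rw [RCLike.inner_apply, hcoe]; exact mul_comm _ _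
    rw [tsum_congr h1, hmap _ (fun i hi => by rw [hfz i hi, mul_zero])]
    have hterm : ∀ j ∈ Finset.range (k+1), conj (f (m + (j:ℤ))) * f (m + (j:ℤ)) = ((t:ℂ))^(2*j) := by
      intro j hj
      rw [Finset.mem_range] at hj
      rw [hfap j hj, map_mul, map_pow, map_pow, Complex.conj_ofReal]
      calc conj ω ^ j * (t:ℂ)^j * (ω^j * (t:ℂ)^j)
          = (conj ω * ω)^j * ((t:ℂ)^j * (t:ℂ)^j) := by rw [mul_pow]; ring
        _ = (t:ℂ)^(2*j) := by rw [hωω, one_pow, one_mul, ← pow_add, two_mul]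
    rw [Finset.sum_congr rfl hterm]
    unfold Qq
    push_cast
    ring
  -- inner u (A u)
  have hval : (inner (𝕜 := ℂ) u (A u) : ℂ) = (ω + γ * conj ω) * ((Pp t (k+1) : ℝ) : ℂ) := by
    rw [lp.inner_eq_tsum]
    have hterm0 : ∀ i, (inner (𝕜 := ℂ) ((u : ℤ → ℂ) i) ((A u : ℤ → ℂ) i) : ℂ)
        = conj (f i) * (f (i+1) + c (i-1) * f (i-1)) := by
      intro i
      rw [RCLike.inner_apply, hA u i, hcoe]; exact mul_comm _ _
    rw [tsum_congr hterm0,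
      hmap _ (fun i hi => by rw [hfz i hi]; simp)]
    have hsplit : ∀ j ∈ Finset.range (k+1),
        conj (f (m + (j:ℤ))) * (f (m + (j:ℤ) + 1) + c (m + (j:ℤ) - 1) * f (m + (j:ℤ) - 1))
          = conj (f (m + (j:ℤ))) * f (m + (j:ℤ) + 1)
            + c (m + (j:ℤ) - 1) * (conj (f (m + (j:ℤ))) * f (m + (j:ℤ) - 1)) := fun j _ => by ring
    rw [Finset.sum_congr rfl hsplit, Finset.sum_add_distrib]
    have hS1 : ∑ j ∈ Finset.range (k+1), conj (f (m + (j:ℤ))) * f (m + (j:ℤ) + 1)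
        = ω * ((Pp t (k+1) : ℝ) : ℂ) := by
      rw [Finset.sum_range_succ]
      have hlast : f (m + (k:ℤ) + 1) = 0 := hfz _ (by push_cast; omega)
      rw [hlast, mul_zero, add_zero]
      have hterm : ∀ j ∈ Finset.range k, conj (f (m + (j:ℤ))) * f (m + (j:ℤ) + 1)
          = ω * (t:ℂ)^(2*j+1) := by
        intro j hj
        rw [Finset.mem_range] at hj
        have h1 : f (m + (j:ℤ) + 1) = ω^(j+1) * (t:ℂ)^(j+1) := by
          rw [show m + (j:ℤ) + 1 = m + ((j+1:ℕ):ℤ) by push_cast; ring]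
          exact hfap (j+1) (by omega)
        rw [hfap j (by omega), h1, map_mul, map_pow, map_pow, Complex.conj_ofReal]
        calc conj ω ^ j * (t:ℂ)^j * (ω^(j+1) * (t:ℂ)^(j+1))
            = ((conj ω * ω)^j * ω) * ((t:ℂ)^j * (t:ℂ)^(j+1)) := by
              rw [mul_pow, pow_succ]; ring
          _ = ω * (t:ℂ)^(2*j+1) := by
              rw [hωω, one_pow, one_mul, ← pow_add]
              congr 2
              omega
      rw [Finset.sum_congr rfl hterm, ← Finset.mul_sum]
      congr 1
      unfold Pp
      push_cast
      ring
    have hS2 : ∑ j ∈ Finset.range (k+1),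
          c (m + (j:ℤ) - 1) * (conj (f (m + (j:ℤ))) * f (m + (j:ℤ) - 1))
        = γ * conj ω * ((Pp t (k+1) : ℝ) : ℂ) := by
      rw [Finset.sum_range_succ']
      have h0 : f (m + ((0:ℕ):ℤ) - 1) = 0 := hfz _ (by push_cast; omega)
      rw [h0, mul_zero, mul_zero, add_zero]
      have hterm : ∀ j ∈ Finset.range k,
          c (m + ((j+1:ℕ):ℤ) - 1) * (conj (f (m + ((j+1:ℕ):ℤ))) * f (m + ((j+1:ℕ):ℤ) - 1))
            = (γ * conj ω) * (t:ℂ)^(2*j+1) := by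
        intro j hj
        rw [Finset.mem_range] at hj
        have hc2 : c (m + ((j+1:ℕ):ℤ) - 1) = γ := by
          rw [show m + ((j+1:ℕ):ℤ) - 1 = m + (j:ℤ) by push_cast; ring]
          exact hblock j (by omega)
        have h1 : f (m + ((j+1:ℕ):ℤ)) = ω^(j+1) * (t:ℂ)^(j+1) := hfap (j+1) (by omega)
        have h2 : f (m + ((j+1:ℕ):ℤ) - 1) = ω^j * (t:ℂ)^j := by
          rw [show m + ((j+1:ℕ):ℤ) - 1 = m + (j:ℤ) by push_cast; ring]
          exact hfap j (by omega)
        rw [hc2, h1, h2, map_mul, map_pow, map_pow, Complex.conj_ofReal]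
        calc γ * (conj ω ^ (j+1) * (t:ℂ)^(j+1) * (ω^j * (t:ℂ)^j))
            = ((conj ω * ω)^j * (γ * conj ω)) * ((t:ℂ)^(j+1) * (t:ℂ)^j) := by
              rw [mul_pow, pow_succ]; ring
          _ = (γ * conj ω) * (t:ℂ)^(2*j+1) := by
              rw [hωω, one_pow, one_mul, ← pow_add]
              congr 2
              omega
      rw [Finset.sum_congr rfl hterm, ← Finset.mul_sum]
      congr 1
      unfold Pp
      push_cast
      ring
    rw [hS1, hS2]
    ring
  -- normalize
  have hnormsq : ‖u‖^2 = Qq t (k+1) := by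
    have := InnerProductSpace.norm_sq_eq_re_inner (𝕜 := ℂ) u
    rw [hQc] at this
    simpa using this
  have hune : ‖u‖ ≠ 0 := by
    intro h
    rw [h] at hnormsq
    simp at hnormsq
    linarith
  set r : ℂ := ((‖u‖⁻¹ : ℝ) : ℂ) with hr
  refine ⟨r • u, ?_, ?_, ?_⟩
  · rw [norm_smul]
    simp [hr, abs_of_nonneg (norm_nonneg u), inv_mul_cancel₀ hune]
  · intro i hi
    rw [lp.coeFn_smul] at hi
    simp only [Pi.smul_apply, smul_eq_mul] at hi
    by_contra hcond
    exact hi (mul_eq_zero_of_right _ (hfz i hcond))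
  · rw [map_smul, inner_smul_left, inner_smul_right, hval]
    have hrr : conj r * r = ((Qq t (k+1))⁻¹ : ℝ) := by
      rw [hr, Complex.conj_ofReal, ← Complex.ofReal_mul, ← hnormsq]
      push_cast
      rw [pow_two]
      ring
    rw [← mul_assoc, hrr]
    push_cast
    field_simp

lemma ratio_eq (s t : ℝ) (n : ℕ) (hn : 1 ≤ n) (heq : Pp t n = s * Qq t n) :
    Pp t n / Qq t n = s := by
  rw [heq]
  field_simp [ne_of_gt (Qq_pos t n hn)]

lemma ball_subset_numRange (A0 : Hseq →L[ℂ] Hseq) (hA0 : IsTridiag (fun _ => (0:ℂ)) A0)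
    (z : ℂ) (hz : ‖z‖ < 1) : z ∈ numRange A0 := by
  obtain ⟨n, hn, t, ht0, ht1, heq⟩ := exists_t ‖z‖ (norm_nonneg z) hz
  set ω : ℂ := if z = 0 then 1 else z / ‖z‖ with hω
  have hωn : ‖ω‖ = 1 := by
    rw [hω]
    split_ifs with h
    · simp
    · rw [norm_div]
      simp only [Complex.norm_real, norm_norm]
      rw [div_self (by simpa [norm_eq_zero] using h)]
  obtain ⟨x, hx1, _, hx3⟩ := realize (fun _ => (0:ℂ)) A0 hA0 0 0 n hn
    (fun j _ => rfl) ω hωn t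
  refine ⟨x, hx1, ?_⟩
  rw [hx3, ratio_eq ‖z‖ t n hn heq]
  rw [hω]
  split_ifs with h
  · simp [h]
  · rw [zero_mul, add_zero, div_mul_eq_mul_div]
    exact mul_div_cancel_right₀ z (Complex.ofReal_ne_zero.mpr (norm_ne_zero_iff.mpr h))

lemma segment_subset_numRange (A1 : Hseq →L[ℂ] Hseq) (hA1 : IsTridiag (fun _ => (1:ℂ)) A1)
    (ρ : ℝ) (hρ : |ρ| < 2) : ((ρ:ℝ) : ℂ) ∈ numRange A1 := by
  have hs0 : 0 ≤ |ρ|/2 := by positivity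
  have hs1 : |ρ|/2 < 1 := by linarith
  obtain ⟨n, hn, t, ht0, ht1, heq⟩ := exists_t (|ρ|/2) hs0 hs1
  set ω : ℂ := if 0 ≤ ρ then 1 else -1 with hω
  have hωn : ‖ω‖ = 1 := by
    rw [hω]; split_ifs <;> simp
  obtain ⟨x, hx1, _, hx3⟩ := realize (fun _ => (1:ℂ)) A1 hA1 1 0 n hn
    (fun j _ => rfl) ω hωn t
  refine ⟨x, hx1, ?_⟩
  rw [hx3, ratio_eq (|ρ|/2) t n hn heq]
  rw [hω]
  split_ifs with h
  · simp only [map_one, one_mul, Complex.conj_eq_iff_re]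
    rw [show ((1:ℂ) + 1) = (2:ℂ) by norm_num]
    rw [abs_of_nonneg h]
    push_cast
    ring
  · simp only [map_neg, map_one]
    rw [abs_of_neg (lt_of_not_ge h)]
    push_cast
    ring

lemma forward (b : ℤ → ℂ) (hb : ∀ i, b i = 0 ∨ b i = 1)
    (Ab : Hseq →L[ℂ] Hseq) (hAb : IsTridiag b Ab)
    (A0 : Hseq →L[ℂ] Hseq) (hA0 : IsTridiag (fun _ => (0 : ℂ)) A0)
    (A1 : Hseq →L[ℂ] Hseq) (hA1 : IsTridiag (fun _ => (1 : ℂ)) A1) :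
    numRange Ab ⊆ convexHull ℝ (numRange A0 ∪ numRange A1) := by
  rintro z ⟨x, hx, rfl⟩
  set xi : ℤ → ℂ := (x : ℤ → ℂ) with hxi
  set a : ℤ → ℂ := fun j => conj (xi j) * xi (j+1) with ha
  set β : ℤ → ℝ := fun j => if b j = 0 then (0:ℝ) else 1 with hβ
  have hβ01 : ∀ j, β j = 0 ∨ β j = 1 := fun j => by
    rw [hβ]; dsimp only; split_ifs <;> simp
  have hbβ : ∀ j, b j = ((β j : ℝ) : ℂ) := by
    intro j
    rcases hb j with h | h <;> rw [hβ] <;> dsimp only <;> rw [h] <;> simp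
  have hnorm : ∀ j, ‖a j‖ = ‖xi j‖ * ‖xi (j+1)‖ := fun j => by
    rw [ha]; dsimp only; rw [norm_mul, RCLike.norm_conj]
  have hsa : Summable a := term1_summable x
  have hNa : Summable (fun j => ‖a j‖) := by
    simp_rw [hnorm]
    exact prod_summable01 x
  have hbound0 : ∀ j, ‖(1 - ((β j : ℝ):ℂ)) * a j‖ = (1 - β j) * ‖a j‖ := by
    intro j
    rw [norm_mul]
    congr 1
    rw [show (1 - ((β j : ℝ):ℂ)) = (((1 - β j : ℝ)):ℂ) by push_cast; ring,
      Complex.norm_real]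
    rcases hβ01 j with h | h <;> rw [h] <;> norm_num
  have hbound1 : ∀ j, ‖((β j : ℝ):ℂ) * a j‖ = β j * ‖a j‖ := by
    intro j
    rw [norm_mul, Complex.norm_real]
    rcases hβ01 j with h | h <;> rw [h] <;> norm_num
  have hU' : Summable (fun j => (1 - ((β j : ℝ):ℂ)) * a j) := by
    apply Summable.of_norm
    apply Summable.of_nonneg_of_le (fun j => norm_nonneg _) (fun j => ?_) hNa
    rw [hbound0 j]
    rcases hβ01 j with h | h <;> rw [h] <;> simp [norm_nonneg]
  have hV' : Summable (fun j => ((β j : ℝ):ℂ) * a j) := by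
    apply Summable.of_norm
    apply Summable.of_nonneg_of_le (fun j => norm_nonneg _) (fun j => ?_) hNa
    rw [hbound1 j]
    rcases hβ01 j with h | h <;> rw [h] <;> simp [norm_nonneg]
  set U : ℂ := ∑' j, (1 - ((β j : ℝ):ℂ)) * a j with hU
  set V : ℂ := ∑' j, ((β j : ℝ):ℂ) * a j with hV
  have hσ : ∑' j, a j = U + V := by
    rw [hU, hV, ← Summable.tsum_add hU' hV']
    exact tsum_congr fun j => by ring
  have hτ : ∑' j, b j * (conj (xi (j+1)) * xi j) = conj V := by
    have h1 : ∀ j, b j * (conj (xi (j+1)) * xi j) = conj (((β j : ℝ):ℂ) * a j) := by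
      intro j
      rw [hbβ j, ha]
      dsimp only
      rw [map_mul, map_mul, Complex.conj_ofReal, Complex.conj_conj]
      ring
    rw [tsum_congr h1, hV]
    simp only [starRingEnd_apply]
    exact tsum_star.symm
  have hval : (inner (𝕜 := ℂ) x (Ab x) : ℂ) = U + V + conj V := by
    rw [inner_tridiag b (fun i => by rcases hb i with h|h <;> rw [h] <;> norm_num) Ab hAb x,
      ← hxi, ← ha]
    rw [hσ, hτ]
  -- real bounds
  have hs0sum : Summable (fun j => (1 - β j) * ‖a j‖) := by
    apply Summable.of_nonneg_of_le (fun j => ?_) (fun j => ?_) hNa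
    · rcases hβ01 j with h | h <;> rw [h] <;> positivity
    · rcases hβ01 j with h | h <;> rw [h] <;> simp [norm_nonneg]
  have hs1sum : Summable (fun j => β j * ‖a j‖) := by
    apply Summable.of_nonneg_of_le (fun j => ?_) (fun j => ?_) hNa
    · rcases hβ01 j with h | h <;> rw [h] <;> positivity
    · rcases hβ01 j with h | h <;> rw [h] <;> simp [norm_nonneg]
  set s0 : ℝ := ∑' j, (1 - β j) * ‖a j‖ with hs0
  set s1 : ℝ := ∑' j, β j * ‖a j‖ with hs1
  have hs0nn : 0 ≤ s0 := tsum_nonneg fun j => by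
    rcases hβ01 j with h | h <;> rw [h] <;> positivity
  have hs1nn : 0 ≤ s1 := tsum_nonneg fun j => by
    rcases hβ01 j with h | h <;> rw [h] <;> positivity
  have hUb : ‖U‖ ≤ s0 := by
    rw [hU, hs0]
    calc ‖∑' j, (1 - ((β j : ℝ):ℂ)) * a j‖ ≤ ∑' j, ‖(1 - ((β j : ℝ):ℂ)) * a j‖ :=
          norm_tsum_le_tsum_norm (by simp_rw [hbound0]; exact hs0sum)
      _ = ∑' j, (1 - β j) * ‖a j‖ := tsum_congr fun j => hbound0 j
  have hVb : ‖V‖ ≤ s1 := by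
    rw [hV, hs1]
    calc ‖∑' j, ((β j : ℝ):ℂ) * a j‖ ≤ ∑' j, ‖((β j : ℝ):ℂ) * a j‖ :=
          norm_tsum_le_tsum_norm (by simp_rw [hbound1]; exact hs1sum)
      _ = ∑' j, β j * ‖a j‖ := tsum_congr fun j => hbound1 j
  have hsum01 : s0 + s1 = ∑' j, ‖a j‖ := by
    rw [hs0, hs1, ← Summable.tsum_add hs0sum hs1sum]
    exact tsum_congr fun j => by ring
  have hSlt : ∑' j, ‖a j‖ < 1 := by
    simp_rw [hnorm]
    exact S_lt_one x hx
  have hlt : s0 + s1 < 1 := by rw [hsum01]; exact hSlt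
  -- convex combination
  set t : ℝ := (1 + s0 - s1)/2 with htdef
  have ht0 : 0 < t := by rw [htdef]; linarith
  have ht1 : t < 1 := by rw [htdef]; linarith
  have hs0t : s0 < t := by rw [htdef]; linarith
  have hs1t : s1 < 1 - t := by rw [htdef]; linarith
  set z0 : ℂ := U / (t : ℂ) with hz0def
  set z1r : ℝ := 2 * V.re / (1 - t) with hz1def
  have hz0 : ‖z0‖ < 1 := by
    rw [hz0def, norm_div, Complex.norm_real, Real.norm_eq_abs, abs_of_pos ht0, div_lt_one ht0]
    exact lt_of_le_of_lt hUb hs0t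
  have hz1 : |z1r| < 2 := by
    rw [hz1def, abs_div, abs_of_pos (by linarith : (0:ℝ) < 1 - t), div_lt_iff₀ (by linarith)]
    have h1 : |V.re| ≤ ‖V‖ := Complex.abs_re_le_norm V
    rw [abs_mul, abs_two]
    nlinarith
  have hz0mem : z0 ∈ numRange A0 := ball_subset_numRange A0 hA0 z0 hz0
  have hz1mem : ((z1r : ℝ) : ℂ) ∈ numRange A1 := segment_subset_numRange A1 hA1 z1r hz1
  have hcomb := (convex_convexHull ℝ (numRange A0 ∪ numRange A1))
    (subset_convexHull ℝ _ (Or.inl hz0mem))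
    (subset_convexHull ℝ _ (Or.inr hz1mem))
    (le_of_lt ht0) (by linarith : (0:ℝ) ≤ 1 - t) (by ring)
  have hfinal : (inner (𝕜 := ℂ) x (Ab x) : ℂ) = t • z0 + (1 - t) • ((z1r : ℝ) : ℂ) := by
    rw [hval]
    have h1 : t • z0 = U := by
      rw [hz0def, Complex.real_smul, mul_div_cancel₀]
      exact Complex.ofReal_ne_zero.mpr (ne_of_gt ht0)
    have h2 : (1 - t) • ((z1r : ℝ) : ℂ) = V + conj V := by
      rw [hz1def, Complex.real_smul, Complex.add_conj]
      rw [← Complex.ofReal_mul]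
      congr 1
      have hne : (1:ℝ) - t ≠ 0 := sub_ne_zero.mpr (by linarith)
      field_simp
    rw [h1, h2]
    ring
  rw [hfinal]
  exact hcomb

lemma sigma_lt_one (x : Hseq) (hx : ‖x‖ = 1) :
    ‖∑' j : ℤ, conj ((x : ℤ → ℂ) j) * (x : ℤ → ℂ) (j + 1)‖ < 1 := by
  have hNa : Summable (fun j : ℤ => ‖conj ((x : ℤ → ℂ) j) * (x : ℤ → ℂ) (j + 1)‖) := by
    have h : ∀ j : ℤ, ‖conj ((x : ℤ → ℂ) j) * (x : ℤ → ℂ) (j+1)‖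
        = ‖(x : ℤ → ℂ) j‖ * ‖(x : ℤ → ℂ) (j+1)‖ := fun j => by
      rw [norm_mul, RCLike.norm_conj]
    simp_rw [h]
    exact prod_summable01 x
  calc ‖∑' j : ℤ, conj ((x : ℤ → ℂ) j) * (x : ℤ → ℂ) (j + 1)‖
      ≤ ∑' j : ℤ, ‖conj ((x : ℤ → ℂ) j) * (x : ℤ → ℂ) (j + 1)‖ := norm_tsum_le_tsum_norm hNa
    _ = ∑' j : ℤ, ‖(x : ℤ → ℂ) j‖ * ‖(x : ℤ → ℂ) (j+1)‖ := tsum_congr fun j => by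
          rw [norm_mul, RCLike.norm_conj]
    _ < 1 := S_lt_one x hx

lemma numRange_A0_subset (A0 : Hseq →L[ℂ] Hseq) (hA0 : IsTridiag (fun _ => (0:ℂ)) A0) :
    numRange A0 ⊆ Metric.ball (0:ℂ) 1 := by
  rintro z ⟨x, hx, rfl⟩
  rw [Metric.mem_ball, dist_zero_right]
  rw [inner_tridiag (fun _ => (0:ℂ)) (fun i => by norm_num) A0 hA0 x]
  simp only [zero_mul, tsum_zero, add_zero]
  exact sigma_lt_one x hx

lemma numRange_A1_subset (A1 : Hseq →L[ℂ] Hseq) (hA1 : IsTridiag (fun _ => (1:ℂ)) A1) :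
    numRange A1 ⊆ (Complex.ofReal '' Set.Ioo (-2:ℝ) 2) := by
  rintro z ⟨x, hx, rfl⟩
  rw [inner_tridiag (fun _ => (1:ℂ)) (fun i => by norm_num) A1 hA1 x]
  set σ : ℂ := ∑' j : ℤ, conj ((x : ℤ → ℂ) j) * (x : ℤ → ℂ) (j + 1) with hσ
  have hτ : ∑' j : ℤ, (1:ℂ) * (conj ((x : ℤ → ℂ) (j+1)) * (x : ℤ → ℂ) j) = conj σ := by
    have h1 : ∀ j : ℤ, (1:ℂ) * (conj ((x : ℤ → ℂ) (j+1)) * (x : ℤ → ℂ) j)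
        = conj (conj ((x : ℤ → ℂ) j) * (x : ℤ → ℂ) (j+1)) := fun j => by
      rw [one_mul, map_mul, Complex.conj_conj]
      ring
    rw [tsum_congr h1, hσ]
    simp only [starRingEnd_apply]
    exact tsum_star.symm
  rw [hτ, Complex.add_conj]
  have hb : ‖σ‖ < 1 := sigma_lt_one x hx
  have hre : |σ.re| ≤ ‖σ‖ := Complex.abs_re_le_norm σ
  rw [abs_le] at hre
  exact ⟨2 * σ.re, ⟨by linarith, by linarith⟩, rfl⟩

lemma exists_block (b : ℤ → ℂ) (hb : ∀ i, b i = 0 ∨ b i = 1) (γ : ℂ) (hγ01 : γ = 0 ∨ γ = 1)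
    (hγ : (fun _ : ℤ => γ) ∈ closure (shiftOrbit b)) (N : ℕ) :
    ∃ m : ℤ, ∀ i : ℤ, m ≤ i → i ≤ m + N → b i = γ := by
  set U : Set (ℤ → ℂ) := ⋂ i ∈ Finset.Icc (0:ℤ) N, ((fun c : ℤ → ℂ => c i) ⁻¹' Metric.ball γ (1/2)) with hUdef
  have hUopen : IsOpen U := by
    apply isOpen_biInter_finset
    intro i _
    exact (continuous_apply i).isOpen_preimage _ Metric.isOpen_ball
  have hγU : (fun _ : ℤ => γ) ∈ U := by
    rw [hUdef]
    simp only [Set.mem_iInter, Set.mem_preimage, Metric.mem_ball]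
    intro i _
    norm_num
  obtain ⟨c, hcU, hcOrb⟩ := _root_.mem_closure_iff.mp hγ U hUopen hγU
  obtain ⟨n, rfl⟩ := hcOrb
  refine ⟨n, fun i him hiM => ?_⟩
  have hi0 : i - n ∈ Finset.Icc (0:ℤ) N := by
    rw [Finset.mem_Icc]
    omega
  have hdist : dist (b (i - n + n)) γ < 1/2 := by
    rw [hUdef] at hcU
    simp only [Set.mem_iInter, Set.mem_preimage, Metric.mem_ball] at hcU
    exact hcU (i - n) hi0
  rw [show i - n + n = i by ring] at hdist
  rcases hb i with h | h <;> rcases hγ01 with h' | h' <;> rw [h, h'] at hdist ⊢ <;>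
    first
      | rfl
      | (exfalso
         rw [Complex.dist_eq] at hdist
         norm_num at hdist)

lemma combine (c : ℤ → ℂ) (A : Hseq →L[ℂ] Hseq) (hA : IsTridiag c A)
    (u v : Hseq) (hu : ‖u‖ = 1) (hv : ‖v‖ = 1)
    (hsep : ∀ i : ℤ, (u : ℤ → ℂ) i ≠ 0 →
      (v : ℤ → ℂ) (i-1) = 0 ∧ (v : ℤ → ℂ) i = 0 ∧ (v : ℤ → ℂ) (i+1) = 0)
    (α β : ℝ) (hαβ : α^2 + β^2 = 1) :
    ∃ x : Hseq, ‖x‖ = 1 ∧ (inner (𝕜:=ℂ) x (A x) : ℂ)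
      = ((α^2 : ℝ) : ℂ) * (inner (𝕜:=ℂ) u (A u) : ℂ)
        + ((β^2 : ℝ) : ℂ) * (inner (𝕜:=ℂ) v (A v) : ℂ) := by
  set x : Hseq := ((α:ℂ) • u + (β:ℂ) • v) with hxdef
  have hxc : ∀ i, (x : ℤ → ℂ) i = (α:ℂ) * (u : ℤ → ℂ) i + (β:ℂ) * (v : ℤ → ℂ) i := by
    intro i
    rw [hxdef]
    rw [lp.coeFn_add, lp.coeFn_smul, lp.coeFn_smul]
    simp
  have hAxc : ∀ i, (A x : ℤ → ℂ) i = (α:ℂ) * (A u : ℤ → ℂ) i + (β:ℂ) * (A v : ℤ → ℂ) i := by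
    intro i
    rw [hxdef, map_add, map_smul, map_smul]
    rw [lp.coeFn_add, lp.coeFn_smul, lp.coeFn_smul]
    simp
  have hvu : ∀ i, (v : ℤ → ℂ) i ≠ 0 → (u : ℤ → ℂ) i = 0 := by
    intro i hvi
    by_contra hui
    exact hvi (hsep i hui).2.1
  have huAv : ∀ i, (u : ℤ → ℂ) i ≠ 0 → (A v : ℤ → ℂ) i = 0 := by
    intro i hui
    rw [hA v i, (hsep i hui).2.2, (hsep i hui).1]
    simp
  have hvAu : ∀ i, (v : ℤ → ℂ) i ≠ 0 → (A u : ℤ → ℂ) i = 0 := by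
    intro i hvi
    rw [hA u i]
    have h1 : (u : ℤ → ℂ) (i+1) = 0 := by
      by_contra h
      have := (hsep (i+1) h).1
      rw [add_sub_cancel_right] at this
      exact hvi this
    have h2 : (u : ℤ → ℂ) (i-1) = 0 := by
      by_contra h
      have := (hsep (i-1) h).2.2
      rw [sub_add_cancel] at this
      exact hvi this
    rw [h1, h2]
    simp
  -- pointwise identities
  have hpt : ∀ i, (inner (𝕜:=ℂ) ((x : ℤ → ℂ) i) ((A x : ℤ → ℂ) i) : ℂ)
      = ((α^2 : ℝ) : ℂ) * (inner (𝕜:=ℂ) ((u : ℤ → ℂ) i) ((A u : ℤ → ℂ) i) : ℂ)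
        + ((β^2 : ℝ) : ℂ) * (inner (𝕜:=ℂ) ((v : ℤ → ℂ) i) ((A v : ℤ → ℂ) i) : ℂ) := by
    intro i
    rw [RCLike.inner_apply, RCLike.inner_apply, RCLike.inner_apply, hxc i, hAxc i]
    by_cases hui : (u : ℤ → ℂ) i = 0
    · by_cases hvi : (v : ℤ → ℂ) i = 0
      · rw [hui, hvi]
        simp only [map_zero, map_mul, Complex.conj_ofReal, mul_zero, zero_mul, add_zero,
          zero_add]
        try push_cast
        try ring
      · rw [hui, hvAu i hvi]
        simp only [map_zero, map_mul, Complex.conj_ofReal, mul_zero, zero_mul, add_zero,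
          zero_add]
        try push_cast
        try ring
    · rw [(hsep i hui).2.1, huAv i hui]
      simp only [map_zero, map_mul, Complex.conj_ofReal, mul_zero, zero_mul, add_zero,
        zero_add]
      try push_cast
      try ring
  have hpt2 : ∀ i, (inner (𝕜:=ℂ) ((x : ℤ → ℂ) i) ((x : ℤ → ℂ) i) : ℂ)
      = ((α^2 : ℝ) : ℂ) * (inner (𝕜:=ℂ) ((u : ℤ → ℂ) i) ((u : ℤ → ℂ) i) : ℂ)
        + ((β^2 : ℝ) : ℂ) * (inner (𝕜:=ℂ) ((v : ℤ → ℂ) i) ((v : ℤ → ℂ) i) : ℂ) := by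
    intro i
    rw [RCLike.inner_apply, RCLike.inner_apply, RCLike.inner_apply, hxc i]
    by_cases hui : (u : ℤ → ℂ) i = 0
    · by_cases hvi : (v : ℤ → ℂ) i = 0
      · rw [hui, hvi]
        simp only [map_zero, map_mul, Complex.conj_ofReal, mul_zero, zero_mul, add_zero,
          zero_add]
        try push_cast
        try ring
      · rw [hui]
        simp only [map_zero, map_mul, Complex.conj_ofReal, mul_zero, zero_mul, add_zero,
          zero_add]
        try push_cast
        try ring
    · rw [(hsep i hui).2.1]
      simp only [map_zero, map_mul, Complex.conj_ofReal, mul_zero, zero_mul, add_zero,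
        zero_add]
      try push_cast
      try ring
  have hinner : (inner (𝕜:=ℂ) x (A x) : ℂ)
      = ((α^2 : ℝ) : ℂ) * (inner (𝕜:=ℂ) u (A u) : ℂ)
        + ((β^2 : ℝ) : ℂ) * (inner (𝕜:=ℂ) v (A v) : ℂ) := by
    rw [lp.inner_eq_tsum, tsum_congr hpt,
      Summable.tsum_add ((lp.summable_inner u (A u)).mul_left ((α^2 : ℝ) : ℂ)) ((lp.summable_inner v (A v)).mul_left ((β^2 : ℝ) : ℂ)),
      tsum_mul_left, tsum_mul_left, ← lp.inner_eq_tsum, ← lp.inner_eq_tsum]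
  have hnormx : ‖x‖ = 1 := by
    have hxx : (inner (𝕜:=ℂ) x x : ℂ) = 1 := by
      rw [lp.inner_eq_tsum, tsum_congr hpt2,
        Summable.tsum_add ((lp.summable_inner u u).mul_left ((α^2 : ℝ) : ℂ)) ((lp.summable_inner v v).mul_left ((β^2 : ℝ) : ℂ)),
        tsum_mul_left, tsum_mul_left, ← lp.inner_eq_tsum, ← lp.inner_eq_tsum,
        inner_self_eq_norm_sq_to_K, inner_self_eq_norm_sq_to_K, hu, hv]
      push_cast
      norm_num
      exact_mod_cast hαβ
    have h2 : ‖x‖^2 = 1 := by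
      have := InnerProductSpace.norm_sq_eq_re_inner (𝕜 := ℂ) x
      rw [hxx] at this
      simpa using this
    nlinarith [norm_nonneg x]
  exact ⟨x, hnormx, hinner⟩

lemma reverse (b : ℤ → ℂ) (hb : ∀ i, b i = 0 ∨ b i = 1)
    (Ab : Hseq →L[ℂ] Hseq) (hAb : IsTridiag b Ab)
    (A0 : Hseq →L[ℂ] Hseq) (hA0 : IsTridiag (fun _ => (0 : ℂ)) A0)
    (A1 : Hseq →L[ℂ] Hseq) (hA1 : IsTridiag (fun _ => (1 : ℂ)) A1)
    (h0 : (fun _ : ℤ => (0 : ℂ)) ∈ closure (shiftOrbit b))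
    (h1 : (fun _ : ℤ => (1 : ℂ)) ∈ closure (shiftOrbit b)) :
    convexHull ℝ (numRange A0 ∪ numRange A1) ⊆ numRange Ab := by
  intro z hz
  have hz' : z ∈ convexHull ℝ ((Metric.ball (0:ℂ) 1) ∪ (Complex.ofReal '' Set.Ioo (-2:ℝ) 2)) :=
    convexHull_mono (Set.union_subset_union (numRange_A0_subset A0 hA0)
      (numRange_A1_subset A1 hA1)) hz
  have hball : Convex ℝ (Metric.ball (0:ℂ) 1) := convex_ball 0 1
  have himg : Convex ℝ (Complex.ofReal '' Set.Ioo (-2:ℝ) 2) := by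
    rintro _ ⟨r, hr, rfl⟩ _ ⟨q, hq, rfl⟩ p p' hp hp' hpp
    refine ⟨p • r + p' • q, (convex_Ioo (-2:ℝ) 2) hr hq hp hp' hpp, ?_⟩
    rw [Complex.real_smul, Complex.real_smul]
    push_cast [smul_eq_mul]
    ring
  rw [Convex.convexHull_union hball himg ⟨0, by simp⟩
    ⟨(0:ℂ), ⟨0, by norm_num, by norm_num⟩⟩, mem_convexJoin] at hz'
  obtain ⟨z0, hz0, z1, hz1, hseg⟩ := hz'
  obtain ⟨r, hrIoo, rfl⟩ := hz1
  rw [Set.mem_Ioo] at hrIoo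
  obtain ⟨p, q, hp, hq, hpq, rfl⟩ := hseg
  rw [Metric.mem_ball, dist_zero_right] at hz0
  -- set up the two blocks
  obtain ⟨n0, hn0, t0, ht00, ht01, heq0⟩ := exists_t ‖z0‖ (norm_nonneg z0) hz0
  have hrabs : |r| < 2 := by rw [abs_lt]; exact ⟨by linarith [hrIoo.1], by linarith [hrIoo.2]⟩
  obtain ⟨n1, hn1, t1, ht10, ht11, heq1⟩ := exists_t (|r|/2) (by positivity) (by linarith)
  obtain ⟨m0', hm0⟩ := exists_block b hb 0 (Or.inl rfl) h0 (n0 + 1)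
  obtain ⟨m1', hm1⟩ := exists_block b hb 1 (Or.inr rfl) h1 (n1 + 1)
  set m0 : ℤ := m0' + 1 with hm0def
  set m1 : ℤ := m1' + 1 with hm1def
  -- realize z0 on the zero block
  set ω0 : ℂ := if z0 = 0 then 1 else z0 / ‖z0‖ with hω0
  have hω0n : ‖ω0‖ = 1 := by
    rw [hω0]
    split_ifs with h
    · simp
    · rw [norm_div]
      simp only [Complex.norm_real, norm_norm]
      rw [div_self (by simpa [norm_eq_zero] using h)]
  obtain ⟨u, hu1, husupp, huval⟩ := realize b Ab hAb 0 m0 n0 hn0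
    (fun j hj => hm0 (m0 + j) (by omega) (by omega)) ω0 hω0n t0
  have huval' : (inner (𝕜 := ℂ) u (Ab u) : ℂ) = z0 := by
    rw [huval, ratio_eq ‖z0‖ t0 n0 hn0 heq0]
    rw [hω0]
    split_ifs with h
    · simp [h]
    · rw [zero_mul, add_zero, div_mul_eq_mul_div]
      exact mul_div_cancel_right₀ z0 (Complex.ofReal_ne_zero.mpr (norm_ne_zero_iff.mpr h))
  -- realize r on the one block
  set ω1 : ℂ := if 0 ≤ r then 1 else -1 with hω1
  have hω1n : ‖ω1‖ = 1 := by
    rw [hω1]; split_ifs <;> simp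
  obtain ⟨v, hv1, hvsupp, hvval⟩ := realize b Ab hAb 1 m1 n1 hn1
    (fun j hj => hm1 (m1 + j) (by omega) (by omega)) ω1 hω1n t1
  have hvval' : (inner (𝕜 := ℂ) v (Ab v) : ℂ) = ((r:ℝ) : ℂ) := by
    rw [hvval, ratio_eq (|r|/2) t1 n1 hn1 heq1]
    rw [hω1]
    split_ifs with h
    · simp only [map_one, one_mul]
      rw [show ((1:ℂ) + 1) = (2:ℂ) by norm_num, abs_of_nonneg h]
      push_cast
      ring
    · simp only [map_neg, map_one]
      rw [abs_of_neg (lt_of_not_ge h)]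
      push_cast
      ring
  -- separation of supports
  have hbz : ∀ i : ℤ, m0 ≤ i → i < m0 + n0 → b i = 0 := fun i hi hi' =>
    hm0 i (by omega) (by omega)
  have hbo : ∀ i : ℤ, m1 - 1 ≤ i → i ≤ m1 + n1 → b i = 1 := fun i hi hi' =>
    hm1 i (by omega) (by omega)
  have hsep : ∀ i : ℤ, (u : ℤ → ℂ) i ≠ 0 →
      (v : ℤ → ℂ) (i-1) = 0 ∧ (v : ℤ → ℂ) i = 0 ∧ (v : ℤ → ℂ) (i+1) = 0 := by
    intro i hui
    obtain ⟨hiu1, hiu2⟩ := husupp i hui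
    have hbi : b i = 0 := hbz i hiu1 hiu2
    have hkey : ∀ d : ℤ, (v : ℤ → ℂ) (i + d) ≠ 0 → -1 ≤ d → d ≤ 1 → False := by
      intro d hvd hd1 hd2
      obtain ⟨hiv1, hiv2⟩ := hvsupp (i + d) hvd
      have hbi1 : b i = 1 := hbo i (by omega) (by omega)
      rw [hbi] at hbi1
      exact zero_ne_one hbi1
    refine ⟨?_, ?_, ?_⟩
    · by_contra h
      exact hkey (-1) (by rw [show i + -1 = i - 1 by ring]; exact h) (by omega) (by omega)
    · by_contra h
      exact hkey 0 (by rw [add_zero]; exact h) (by omega) (by omega)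
    · by_contra h
      exact hkey 1 h (by omega) (by omega)
  -- combine
  set α : ℝ := Real.sqrt p with hα
  set β : ℝ := Real.sqrt q with hβ
  have hα2 : α^2 = p := Real.sq_sqrt hp
  have hβ2 : β^2 = q := Real.sq_sqrt hq
  obtain ⟨x, hx1, hxval⟩ := combine b Ab hAb u v hu1 hv1 hsep α β (by rw [hα2, hβ2]; exact hpq)
  refine ⟨x, hx1, ?_⟩
  rw [hxval, huval', hvval', hα2, hβ2, Complex.real_smul, Complex.real_smul]

end Stmt7

/-- If both constant sequences `𝟎` and `𝟏` belong to `X_b`, the closure of the shift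
orbit of the `{0,1}`-valued sequence `b`, then `W(A_b) = conv(W(A_𝟎) ∪ W(A_𝟏))`. -/
theorem stmt7 (b : ℤ → ℂ) (hb : ∀ i, b i = 0 ∨ b i = 1)
    (Ab : Hseq →L[ℂ] Hseq) (hAb : IsTridiag b Ab)
    (A0 : Hseq →L[ℂ] Hseq) (hA0 : IsTridiag (fun _ => (0 : ℂ)) A0)
    (A1 : Hseq →L[ℂ] Hseq) (hA1 : IsTridiag (fun _ => (1 : ℂ)) A1)
    (h0 : (fun _ : ℤ => (0 : ℂ)) ∈ closure (shiftOrbit b))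
    (h1 : (fun _ : ℤ => (1 : ℂ)) ∈ closure (shiftOrbit b)) :
    numRange Ab = convexHull ℝ (numRange A0 ∪ numRange A1) :=
  Set.Subset.antisymm (Stmt7.forward b hb Ab hAb A0 hA0 A1 hA1)
    (Stmt7.reverse b hb Ab hAb A0 hA0 A1 hA1 h0 h1)
end
end

section
/- Let 𝒜 be a finite set of complex numbers and let b be a biinfinite sequence with entries in 𝒜. If d belongs to X_b, the closure of the shift orbit of b, then W(A_d) ⊆ closure(W(A_b)) and σ(A_d) ⊆ closure(W(A_b)). -/
open scoped ComplexConjugate ENNReal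
open Filter

noncomputable section

open Topology

set_option maxHeartbeats 1000000

/-- The spectrum of a bounded operator is contained in the closure of its
numerical range. -/
lemma spectrum_subset_closure_numRange (A : Hseq →L[ℂ] Hseq) :
    spectrum ℂ A ⊆ closure (numRange A) := by
  intro z hz
  by_contra hzc
  rw [Metric.mem_closure_iff] at hzc
  push_neg at hzc
  obtain ⟨ε, hε, hsep⟩ := hzc
  set B : Hseq →L[ℂ] Hseq := A - z • (1 : Hseq →L[ℂ] Hseq) with hB
  have hBapp : ∀ x : Hseq, B x = A x - z • x := by
    intro x; simp [hB]
  -- numerical range bound for unit vectors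
  have hunit : ∀ u : Hseq, ‖u‖ = 1 → ε ≤ ‖(inner (𝕜 := ℂ) u (B u) : ℂ)‖ := by
    intro u hu
    have hm : (inner (𝕜 := ℂ) u (A u) : ℂ) ∈ numRange A := ⟨u, hu, rfl⟩
    have h1 : (inner (𝕜 := ℂ) u (B u) : ℂ) = inner (𝕜 := ℂ) u (A u) - z := by
      rw [hBapp, inner_sub_right, inner_smul_right]
      have : (inner (𝕜 := ℂ) u u : ℂ) = 1 := by
        rw [inner_self_eq_norm_sq_to_K, hu]; norm_num
      rw [this, mul_one]
    have := hsep _ hm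
    rw [dist_eq_norm] at this
    rw [h1]
    calc ε ≤ ‖z - inner (𝕜 := ℂ) u (A u)‖ := this
    _ = ‖(inner (𝕜 := ℂ) u (A u) : ℂ) - z‖ := by rw [norm_sub_rev]
  -- lower bound ε‖x‖ ≤ ‖B x‖
  have hlow : ∀ x : Hseq, ε * ‖x‖ ≤ ‖B x‖ := by
    intro x
    rcases eq_or_ne x 0 with rfl | hx
    · simp
    · have hxn : (0:ℝ) < ‖x‖ := norm_pos_iff.2 hx
      set u : Hseq := (‖x‖⁻¹ : ℂ) • x with hu
      have hun : ‖u‖ = 1 := by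
        rw [hu, norm_smul]
        simp [norm_inv, hxn.ne', Complex.norm_real, abs_of_pos hxn]
      have h2 := hunit u hun
      have h3 : (inner (𝕜 := ℂ) u (B u) : ℂ)
          = (‖x‖⁻¹:ℂ) * conj (‖x‖⁻¹:ℂ) * inner (𝕜 := ℂ) x (B x) := by
        rw [hu, map_smul, inner_smul_left, inner_smul_right]; ring
      have h4 : ‖(inner (𝕜 := ℂ) u (B u) : ℂ)‖
          = ‖x‖⁻¹ * ‖x‖⁻¹ * ‖(inner (𝕜 := ℂ) x (B x) : ℂ)‖ := by
        rw [h3]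
        simp [norm_mul]
      have h5 : ε * (‖x‖ * ‖x‖) ≤ ‖(inner (𝕜 := ℂ) x (B x) : ℂ)‖ := by
        rw [h4] at h2
        have := mul_le_mul_of_nonneg_right h2 (le_of_lt (mul_pos hxn hxn))
        calc ε * (‖x‖ * ‖x‖)
            ≤ ‖x‖⁻¹ * ‖x‖⁻¹ * ‖(inner (𝕜 := ℂ) x (B x) : ℂ)‖ * (‖x‖ * ‖x‖) := this
        _ = ‖(inner (𝕜 := ℂ) x (B x) : ℂ)‖ := by field_simp
      have hCS : ‖(inner (𝕜 := ℂ) x (B x) : ℂ)‖ ≤ ‖x‖ * ‖B x‖ := norm_inner_le_norm x (B x)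
      have : ε * (‖x‖ * ‖x‖) ≤ ‖x‖ * ‖B x‖ := h5.trans hCS
      nlinarith
  -- antilipschitz
  have hanti : AntilipschitzWith (ε.toNNReal)⁻¹ B := by
    apply B.antilipschitz_of_bound
    intro x
    rw [NNReal.coe_inv, Real.coe_toNNReal _ hε.le,
      le_inv_mul_iff₀ hε]
    exact hlow x
  have hinj : Function.Injective B := hanti.injective
  have hclosed : IsClosed (Set.range ⇑B) := hanti.isClosed_range B.uniformContinuous
  -- dense range
  have hdense : (LinearMap.range (B : Hseq →ₗ[ℂ] Hseq)).topologicalClosure = ⊤ := by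
    rw [Submodule.topologicalClosure_eq_top_iff]
    rw [Submodule.eq_bot_iff]
    intro y hy
    by_contra hy0
    have hyn : (0:ℝ) < ‖y‖ := norm_pos_iff.2 hy0
    have h0 : (inner (𝕜 := ℂ) (B y) y : ℂ) = 0 :=
      hy (B y) (LinearMap.mem_range_self _ y)
    have h0' : (inner (𝕜 := ℂ) y (B y) : ℂ) = 0 := by
      rw [← inner_conj_symm, h0, map_zero]
    have := hunit ((‖y‖⁻¹ : ℂ) • y) ?_
    · rw [map_smul, inner_smul_left, inner_smul_right, h0', mul_zero, mul_zero, norm_zero] at this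
      linarith
    · rw [norm_smul]
      simp [norm_inv, Complex.norm_real, abs_of_pos hyn]
      field_simp
  have hsurj : Function.Surjective B := by
    have hrange : LinearMap.range (B : Hseq →ₗ[ℂ] Hseq) = (LinearMap.range (B : Hseq →ₗ[ℂ] Hseq)).topologicalClosure := by
      refine le_antisymm (Submodule.le_topologicalClosure _) ?_
      intro y hy
      have : y ∈ closure (Set.range ⇑B) := hy
      rwa [hclosed.closure_eq] at this
    exact LinearMap.range_eq_top.1 (by rw [hrange, hdense])
  -- conclude
  have hIsUnit : IsUnit B := ContinuousLinearMap.isUnit_iff_bijective.2 ⟨hinj, hsurj⟩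
  rw [spectrum.mem_iff] at hz
  apply hz
  have : (algebraMap ℂ (Hseq →L[ℂ] Hseq)) z - A = -B := by
    rw [hB, Algebra.algebraMap_eq_smul_one]; abel
  rw [this]
  exact hIsUnit.neg

lemma inner_tridiag (c : ℤ → ℂ) (A : Hseq →L[ℂ] Hseq) (hA : IsTridiag c A) (x : Hseq) :
    (inner (𝕜 := ℂ) x (A x) : ℂ)
      = ∑' j : ℤ, conj ((x : ℤ → ℂ) j) * ((x : ℤ → ℂ) (j+1) + c (j-1) * (x : ℤ → ℂ) (j-1)) := by
  rw [lp.inner_eq_tsum]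
  apply tsum_congr
  intro j
  rw [hA x j]
  exact RCLike.inner_apply' _ _

lemma shift_inner_eq (b : ℤ → ℂ) (Ab : Hseq →L[ℂ] Hseq) (hAb : IsTridiag b Ab)
    (d : ℤ → ℂ) (Ad : Hseq →L[ℂ] Hseq) (hAd : IsTridiag d Ad)
    (F : Finset ℤ) (n : ℤ) (hagree : ∀ j ∈ F, d (j-1) = b (j-1+n))
    (x : Hseq) (hsupp : ∀ j, (x : ℤ → ℂ) j ≠ 0 → j ∈ F) :
    ∃ y : Hseq, ‖y‖ = ‖x‖ ∧ (inner (𝕜 := ℂ) y (Ab y) : ℂ) = inner (𝕜 := ℂ) x (Ad x) := by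
  classical
  have hmem : Memℓp (fun i : ℤ => (x : ℤ → ℂ) (i - n)) 2 := by
    apply Memℓp.of_exponent_ge (q := 0) ?_ (by norm_num)
    apply memℓp_zero
    apply Set.Finite.subset (F.image (· + n)).finite_toSet
    intro i hi
    simp only [Set.mem_setOf_eq] at hi
    simp only [Finset.coe_image, Set.mem_image, Finset.mem_coe]
    exact ⟨i - n, hsupp _ hi, by ring⟩
  set y : Hseq := (⟨fun i => (x : ℤ → ℂ) (i - n), hmem⟩ : lp (fun _ : ℤ => ℂ) 2) with hy
  have hyc : ∀ i, (y : ℤ → ℂ) i = (x : ℤ → ℂ) (i - n) := fun i => rfl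
  have hnorm : ‖y‖ = ‖x‖ := by
    have h1 : (inner (𝕜 := ℂ) y y : ℂ) = inner (𝕜 := ℂ) x x := by
      rw [lp.inner_eq_tsum, lp.inner_eq_tsum]
      have := (Equiv.subRight n).tsum_eq
        (f := fun i : ℤ => (inner (𝕜 := ℂ) ((x : ℤ → ℂ) i) ((x : ℤ → ℂ) i) : ℂ))
      simpa [Equiv.subRight, hyc] using this
    rw [inner_self_eq_norm_sq_to_K, inner_self_eq_norm_sq_to_K] at h1
    have h2 : (‖y‖ : ℝ)^2 = ‖x‖^2 := by exact_mod_cast h1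
    nlinarith [norm_nonneg y, norm_nonneg x]
  refine ⟨y, hnorm, ?_⟩
  rw [inner_tridiag b Ab hAb y, inner_tridiag d Ad hAd x]
  have := (Equiv.addRight n).tsum_eq
    (f := fun j : ℤ => conj ((y : ℤ → ℂ) j) * ((y : ℤ → ℂ) (j+1) + b (j-1) * (y : ℤ → ℂ) (j-1)))
  rw [← this]
  apply tsum_congr
  intro k
  simp only [Equiv.coe_addRight, hyc]
  have e1 : k + n - n = k := by ring
  have e2 : k + n + 1 - n = k + 1 := by ring
  have e3 : k + n - 1 - n = k - 1 := by ring
  rw [e1, e2, e3]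
  by_cases hk : (x : ℤ → ℂ) k = 0
  · rw [hk, map_zero, zero_mul, zero_mul]
  · have hkF := hsupp k hk
    rw [hagree k hkF]
    congr 3
    ring_nf

lemma alphabet_sep (𝒜 : Finset ℂ) :
    ∃ ε > (0:ℝ), ∀ a ∈ 𝒜, ∀ a' ∈ 𝒜, dist a a' < ε → a = a' := by
  classical
  set S := (𝒜 ×ˢ 𝒜).filter (fun p => p.1 ≠ p.2) with hS
  rcases S.eq_empty_or_nonempty with h | h
  · refine ⟨1, one_pos, fun a ha a' ha' _ => ?_⟩
    by_contra hne
    have hmem : (a, a') ∈ S :=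
      Finset.mem_filter.2 ⟨Finset.mem_product.2 ⟨ha, ha'⟩, hne⟩
    exact absurd hmem (h ▸ Finset.notMem_empty _)
  · obtain ⟨p, hp, hmin⟩ := S.exists_min_image (fun p => dist p.1 p.2) h
    refine ⟨dist p.1 p.2, ?_, ?_⟩
    · exact dist_pos.2 (Finset.mem_filter.1 hp).2
    · intro a ha a' ha' hlt
      by_contra hne
      have hmem : (a, a') ∈ S :=
        Finset.mem_filter.2 ⟨Finset.mem_product.2 ⟨ha, ha'⟩, hne⟩
      exact absurd (hmin (a, a') hmem) (not_le.2 hlt)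

lemma window_agree (𝒜 : Finset ℂ) (b : ℤ → ℂ) (hb : ∀ i, b i ∈ 𝒜)
    (d : ℤ → ℂ) (hd : d ∈ closure (shiftOrbit b)) (G : Finset ℤ) :
    ∃ n : ℤ, ∀ j ∈ G, d j = b (j + n) := by
  classical
  obtain ⟨ε, hε, hsep⟩ := alphabet_sep 𝒜
  -- d has entries in 𝒜
  have hdA : ∀ i, d i ∈ 𝒜 := by
    intro i
    have hcl : IsClosed {c : ℤ → ℂ | c i ∈ (𝒜 : Set ℂ)} :=
      IsClosed.preimage (continuous_apply i) (𝒜.finite_toSet.isClosed)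
    have : d ∈ {c : ℤ → ℂ | c i ∈ (𝒜 : Set ℂ)} := by
      apply closure_minimal ?_ hcl hd
      rintro c ⟨n, rfl⟩
      exact hb _
    exact this
  -- the open neighborhood
  set U : Set (ℤ → ℂ) := ⋂ j ∈ G, (fun c : ℤ → ℂ => c j) ⁻¹' Metric.ball (d j) ε with hU
  have hUopen : IsOpen U := isOpen_biInter_finset
    (fun j _ => (Metric.isOpen_ball).preimage (continuous_apply j))
  have hdU : d ∈ U := by
    simp only [hU, Set.mem_iInter, Set.mem_preimage, Metric.mem_ball]
    intro j _
    simpa using hε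
  obtain ⟨c, hcU, hcO⟩ := _root_.mem_closure_iff.1 hd U hUopen hdU
  obtain ⟨n, rfl⟩ := hcO
  refine ⟨n, fun j hj => ?_⟩
  have hdist : dist (b (j + n)) (d j) < ε := by
    simp only [hU, Set.mem_iInter, Set.mem_preimage, Metric.mem_ball] at hcU
    exact hcU j hj
  exact (hsep _ (hb _) _ (hdA j) hdist).symm

lemma numRange_subset (𝒜 : Finset ℂ) (b : ℤ → ℂ) (hb : ∀ i, b i ∈ 𝒜)
    (Ab : Hseq →L[ℂ] Hseq) (hAb : IsTridiag b Ab)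
    (d : ℤ → ℂ) (hd : d ∈ closure (shiftOrbit b))
    (Ad : Hseq →L[ℂ] Hseq) (hAd : IsTridiag d Ad) :
    numRange Ad ⊆ closure (numRange Ab) := by
  rintro w ⟨x, hx1, rfl⟩
  have hsum : HasSum (fun i : ℤ => lp.single 2 i ((x : ℤ → ℂ) i)) x :=
    lp.hasSum_single (by norm_num) x
  set S : Finset ℤ → Hseq := fun s => ∑ i ∈ s, lp.single 2 i ((x : ℤ → ℂ) i) with hSdef
  have hS : Tendsto S atTop (𝓝 x) := hsum
  have hSnorm : Tendsto (fun s => ‖S s‖) atTop (𝓝 1) := by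
    have := (continuous_norm.tendsto x).comp hS
    rwa [hx1] at this
  have hpos : ∀ᶠ s in atTop, (0:ℝ) < ‖S s‖ :=
    hSnorm.eventually (eventually_gt_nhds one_pos)
  set y : Finset ℤ → Hseq := fun s => ((‖S s‖ : ℂ))⁻¹ • S s with hydef
  have hyx : Tendsto y atTop (𝓝 x) := by
    have h1 : Tendsto (fun s => ((‖S s‖ : ℂ))) atTop (𝓝 (1:ℂ)) := by
      exact_mod_cast (Complex.continuous_ofReal.tendsto 1).comp hSnorm
    have hc : Tendsto (fun s => ((‖S s‖ : ℂ))⁻¹) atTop (𝓝 (1:ℂ)⁻¹) :=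
      h1.inv₀ (by norm_num)
    have := hc.smul hS
    simpa using this
  have hval : Tendsto (fun s => (inner (𝕜:=ℂ) (y s) (Ad (y s)) : ℂ)) atTop
      (𝓝 (inner (𝕜:=ℂ) x (Ad x))) := by
    have hcont : Continuous fun v : Hseq => (inner (𝕜:=ℂ) v (Ad v) : ℂ) :=
      continuous_id.inner Ad.continuous
    exact (hcont.tendsto x).comp hyx
  have hyn : ∀ s : Finset ℤ, (0:ℝ) < ‖S s‖ → ‖y s‖ = 1 := by
    intro s hs
    rw [hydef]
    simp only [norm_smul, norm_inv, Complex.norm_real, Real.norm_eq_abs, abs_of_pos hs]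
    field_simp
  have hS0 : ∀ (s : Finset ℤ) (j : ℤ), j ∉ s → (S s : ℤ → ℂ) j = 0 := by
    intro s j hj
    rw [hSdef]
    simp only [lp.coeFn_sum, Finset.sum_apply, lp.single_apply, Finset.sum_dite_eq]
    simp [hj]
  have hysupp : ∀ (s : Finset ℤ) (j : ℤ), (y s : ℤ → ℂ) j ≠ 0 → j ∈ s := by
    intro s j h
    by_contra hj
    apply h
    rw [hydef]
    simp only [lp.coeFn_smul, Pi.smul_apply, hS0 s j hj, smul_zero]
  apply mem_closure_of_tendsto hval
  filter_upwards [hpos] with s hs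
  obtain ⟨n, hn⟩ := window_agree 𝒜 b hb d hd (s.image (· - 1))
  have hagree : ∀ j ∈ s, d (j-1) = b (j-1+n) := fun j hj =>
    hn _ (Finset.mem_image_of_mem _ hj)
  obtain ⟨v, hv1, hv2⟩ := shift_inner_eq b Ab hAb d Ad hAd s n hagree (y s) (hysupp s)
  exact ⟨v, by rw [hv1, hyn s hs], hv2⟩

/-- If `d` belongs to `X_b`, the closure of the shift orbit of `b` (entries in a
finite alphabet `𝒜 ⊆ ℂ`), then `W(A_d) ⊆ closure (W(A_b))` and
`σ(A_d) ⊆ closure (W(A_b))`. -/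
theorem stmt12 (𝒜 : Finset ℂ) (b : ℤ → ℂ) (hb : ∀ i, b i ∈ 𝒜)
    (Ab : Hseq →L[ℂ] Hseq) (hAb : IsTridiag b Ab)
    (d : ℤ → ℂ) (hd : d ∈ closure (shiftOrbit b))
    (Ad : Hseq →L[ℂ] Hseq) (hAd : IsTridiag d Ad) :
    numRange Ad ⊆ closure (numRange Ab) ∧ spectrum ℂ Ad ⊆ closure (numRange Ab) := by
  have h1 := numRange_subset 𝒜 b hb Ab hAb d hd Ad hAd
  refine ⟨h1, fun z hz => ?_⟩
  have h2 := spectrum_subset_closure_numRange Ad hz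
  have h3 : closure (numRange Ad) ⊆ closure (numRange Ab) := by
    rw [← closure_closure (s := numRange Ab)]
    exact closure_mono h1
  exact h3 h2
end
end

section
/- Let 𝒜 be a finite set of complex numbers and let b be a biinfinite sequence with entries in 𝒜. Then the union over all d ∈ X_b of the closures of the numerical ranges of A_d equals the closure of the numerical range of A_b: ⋃_{d ∈ X_b} closure(W(A_d)) = closure(W(A_b)). -/
open scoped ComplexConjugate ENNReal
open Filter Topology

noncomputable section

lemma meml2_of_finsupp (f : ℤ → ℂ) (S : Finset ℤ) (h : ∀ j ∉ S, f j = 0) :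
    Memℓp f 2 := by
  refine (memℓp_zero ?_).of_exponent_ge (zero_le : (0:ℝ≥0∞) ≤ 2)
  apply Set.Finite.subset S.finite_toSet
  intro j hj
  by_contra hjS
  exact hj (h j hjS)

-- sum of squares bound

lemma sum_sq_le (f : Hseq) (t : Finset ℤ) : ∑ i ∈ t, ‖(f : ℤ → ℂ) i‖ ^ 2 ≤ ‖f‖ ^ 2 := by
  have h := lp.hasSum_norm (p := 2) (by norm_num) f
  have h2 : (2 : ℝ≥0∞).toReal = (2 : ℝ) := by simp
  rw [h2] at h
  have h' : HasSum (fun i => ‖(f : ℤ → ℂ) i‖ ^ (2:ℕ)) (‖f‖ ^ (2:ℕ)) := by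
    convert h using 2 with i
    · rw [← Real.rpow_natCast] ; norm_num
    · rw [← Real.rpow_natCast] ; norm_num
  exact sum_le_hasSum t (fun i _ => by positivity) h'

lemma inner_formula (e : ℤ → ℂ) (Ae : Hseq →L[ℂ] Hseq) (hAe : IsTridiag e Ae)
    (y : Hseq) (S : Finset ℤ) (hy : ∀ j ∉ S, (y : ℤ → ℂ) j = 0) :
    (inner (𝕜 := ℂ) y (Ae y) : ℂ) =
      ∑ j ∈ S, conj ((y : ℤ → ℂ) j) *
        ((y : ℤ → ℂ) (j + 1) + e (j - 1) * (y : ℤ → ℂ) (j - 1)) := by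
  rw [lp.inner_eq_tsum]
  have : ∀ j : ℤ, (inner (𝕜 := ℂ) ((y : ℤ → ℂ) j) ((Ae y : ℤ → ℂ) j) : ℂ) =
      conj ((y : ℤ → ℂ) j) * ((y : ℤ → ℂ) (j + 1) + e (j - 1) * (y : ℤ → ℂ) (j - 1)) := by
    intro j
    rw [RCLike.inner_apply, hAe y j]; exact mul_comm _ _
  rw [tsum_congr this]
  exact tsum_eq_sum (fun j hj => by rw [hy j hj, map_zero, zero_mul])

lemma shift_exists (y : Hseq) (n : ℤ) (S : Finset ℤ) (hy : ∀ j ∉ S, (y : ℤ → ℂ) j = 0) :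
    ∃ y' : Hseq, ‖y'‖ = ‖y‖ ∧ ∀ j, (y' : ℤ → ℂ) j = (y : ℤ → ℂ) (j - n) := by
  set f' : ℤ → ℂ := fun j => (y : ℤ → ℂ) (j - n) with hf'
  have hmem : Memℓp f' 2 := by
    refine meml2_of_finsupp f' (S.image (· + n)) (fun j hj => ?_)
    apply hy
    intro hjS
    exact hj (Finset.mem_image.2 ⟨j - n, hjS, by ring⟩)
  refine ⟨⟨f', hmem⟩, ?_, fun j => rfl⟩
  have hin : (inner (𝕜 := ℂ) (⟨f', hmem⟩ : Hseq) (⟨f', hmem⟩ : Hseq) : ℂ)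
      = inner (𝕜 := ℂ) y y := by
    rw [lp.inner_eq_tsum, lp.inner_eq_tsum]
    exact Equiv.tsum_eq (Equiv.subRight n) (fun j => (inner ℂ ((y : ℤ → ℂ) j) ((y : ℤ → ℂ) j) : ℂ))
  rw [inner_self_eq_norm_sq_to_K, inner_self_eq_norm_sq_to_K] at hin
  have h2 : (‖(⟨f', hmem⟩ : Hseq)‖ : ℝ) ^ 2 = ‖y‖ ^ 2 := by
    exact_mod_cast hin
  calc ‖(⟨f', hmem⟩ : Hseq)‖ = Real.sqrt (‖(⟨f', hmem⟩ : Hseq)‖ ^ 2) :=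
        (Real.sqrt_sq (norm_nonneg _)).symm
    _ = Real.sqrt (‖y‖ ^ 2) := by rw [h2]
    _ = ‖y‖ := Real.sqrt_sq (norm_nonneg _)

lemma trunc_approx (d : ℤ → ℂ) (Ad : Hseq →L[ℂ] Hseq) (x : Hseq) (hx : ‖x‖ = 1)
    (ε : ℝ) (hε : 0 < ε) :
    ∃ (y : Hseq) (S : Finset ℤ), ‖y‖ = 1 ∧ (∀ j ∉ S, (y : ℤ → ℂ) j = 0) ∧
      dist (inner (𝕜 := ℂ) y (Ad y) : ℂ) (inner (𝕜 := ℂ) x (Ad x) : ℂ) < ε := by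
  set T : Finset ℤ → Hseq := fun S => ∑ i ∈ S, lp.single 2 i ((x : ℤ → ℂ) i) with hT
  have h1 : Tendsto T atTop (𝓝 x) := lp.hasSum_single (by norm_num) x
  have hnum : Tendsto (fun S => (inner (𝕜 := ℂ) (T S) (Ad (T S)) : ℂ)) atTop
      (𝓝 (inner (𝕜 := ℂ) x (Ad x))) :=
    h1.inner ((Ad.continuous.tendsto x).comp h1)
  have hden : Tendsto (fun S => ((‖T S‖ : ℂ)) ^ 2) atTop (𝓝 1) := by
    have : Tendsto (fun S => ((‖T S‖ : ℂ))) atTop (𝓝 ((‖x‖ : ℂ))) :=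
      (Complex.continuous_ofReal.tendsto _).comp h1.norm
    have := this.pow 2
    rwa [hx, Complex.ofReal_one, one_pow] at this
  have hq : Tendsto (fun S => (inner (𝕜 := ℂ) (T S) (Ad (T S)) : ℂ) / ((‖T S‖ : ℂ)) ^ 2)
      atTop (𝓝 (inner (𝕜 := ℂ) x (Ad x))) := by
    have := hnum.div hden one_ne_zero
    rw [div_one] at this
    exact this
  have hev1 : ∀ᶠ S in atTop, 0 < ‖T S‖ :=
    h1.norm.eventually (eventually_gt_nhds (by norm_num [hx]))
  have hev2 : ∀ᶠ S in atTop,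
      dist ((inner (𝕜 := ℂ) (T S) (Ad (T S)) : ℂ) / ((‖T S‖ : ℂ)) ^ 2)
        (inner (𝕜 := ℂ) x (Ad x) : ℂ) < ε := by
    have := Metric.tendsto_nhds.1 hq ε hε
    exact this
  obtain ⟨S, hS1, hS2⟩ := (hev1.and hev2).exists
  set c : ℝ := ‖T S‖ with hc
  refine ⟨((c : ℂ))⁻¹ • T S, S, ?_, ?_, ?_⟩
  · rw [norm_smul, norm_inv, Complex.norm_real, Real.norm_eq_abs, abs_of_pos hS1,
      inv_mul_cancel₀ hS1.ne']
  · intro j hj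
    have hTS : (T S : ℤ → ℂ) j = 0 := by
      rw [hT]
      rw [lp.coeFn_sum, Finset.sum_apply]
      exact Finset.sum_eq_zero fun i hi => lp.single_apply_ne 2 i _ (fun h => hj (h ▸ hi))
    rw [lp.coeFn_smul, Pi.smul_apply, hTS, smul_zero]
  · have hinner : (inner (𝕜 := ℂ) (((c : ℂ))⁻¹ • T S) (Ad (((c : ℂ))⁻¹ • T S)) : ℂ)
        = (inner (𝕜 := ℂ) (T S) (Ad (T S)) : ℂ) / ((c : ℂ)) ^ 2 := by
      rw [map_smul, inner_smul_left, inner_smul_right, Complex.conj_inv, Complex.conj_ofReal]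
      have hc0 : (c : ℂ) ≠ 0 := by
        simpa using hS1.ne'
      rw [div_eq_mul_inv, sq, mul_inv]
      ring
    rw [hinner]
    exact hS2

lemma error_bound (y : Hseq) (hy1 : ‖y‖ = 1) (S : Finset ℤ) (u v : ℤ → ℂ) (δ : ℝ)
    (hδ : 0 ≤ δ) (hclose : ∀ k ∈ S, ‖u k - v k‖ ≤ δ) :
    ‖(∑ k ∈ S, conj ((y : ℤ → ℂ) k) * ((y : ℤ → ℂ) (k+1) + u k * (y : ℤ → ℂ) (k-1)))
      - ∑ k ∈ S, conj ((y : ℤ → ℂ) k) * ((y : ℤ → ℂ) (k+1) + v k * (y : ℤ → ℂ) (k-1))‖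
      ≤ δ := by
  rw [← Finset.sum_sub_distrib]
  have hterm : ∀ k ∈ S,
      conj ((y : ℤ → ℂ) k) * ((y : ℤ → ℂ) (k+1) + u k * (y : ℤ → ℂ) (k-1))
        - conj ((y : ℤ → ℂ) k) * ((y : ℤ → ℂ) (k+1) + v k * (y : ℤ → ℂ) (k-1))
      = conj ((y : ℤ → ℂ) k) * ((u k - v k) * (y : ℤ → ℂ) (k-1)) := fun k _ => by ring
  rw [Finset.sum_congr rfl hterm]
  have hsq1 : ∑ k ∈ S, ‖(y : ℤ → ℂ) k‖ ^ 2 ≤ 1 := by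
    have := sum_sq_le y S; rwa [hy1, one_pow] at this
  have hsq2 : ∑ k ∈ S, ‖(y : ℤ → ℂ) (k-1)‖ ^ 2 ≤ 1 := by
    have heq : ∑ j ∈ S.image (· - 1), (fun j => ‖(y : ℤ → ℂ) j‖ ^ 2) j
        = ∑ k ∈ S, (fun j => ‖(y : ℤ → ℂ) j‖ ^ 2) (k - 1) :=
      Finset.sum_image (fun a _ b _ h => by omega)
    simp only [] at heq
    rw [← heq]
    have := sum_sq_le y (S.image (· - 1)); rwa [hy1, one_pow] at this
  calc ‖∑ k ∈ S, conj ((y : ℤ → ℂ) k) * ((u k - v k) * (y : ℤ → ℂ) (k-1))‖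
      ≤ ∑ k ∈ S, ‖conj ((y : ℤ → ℂ) k) * ((u k - v k) * (y : ℤ → ℂ) (k-1))‖ :=
        norm_sum_le _ _
    _ ≤ ∑ k ∈ S, δ * ((‖(y : ℤ → ℂ) k‖ ^ 2 + ‖(y : ℤ → ℂ) (k-1)‖ ^ 2) / 2) := by
        refine Finset.sum_le_sum fun k hk => ?_
        rw [norm_mul, norm_mul, RCLike.norm_conj]
        have h1 : ‖(y : ℤ → ℂ) k‖ * (‖u k - v k‖ * ‖(y : ℤ → ℂ) (k-1)‖)
            ≤ ‖(y : ℤ → ℂ) k‖ * (δ * ‖(y : ℤ → ℂ) (k-1)‖) := by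
          gcongr
          exact hclose k hk
        refine h1.trans ?_
        have h2 : ‖(y : ℤ → ℂ) k‖ * ‖(y : ℤ → ℂ) (k-1)‖
            ≤ (‖(y : ℤ → ℂ) k‖ ^ 2 + ‖(y : ℤ → ℂ) (k-1)‖ ^ 2) / 2 := by
          nlinarith [sq_nonneg (‖(y : ℤ → ℂ) k‖ - ‖(y : ℤ → ℂ) (k-1)‖)]
        calc ‖(y : ℤ → ℂ) k‖ * (δ * ‖(y : ℤ → ℂ) (k-1)‖)
            = δ * (‖(y : ℤ → ℂ) k‖ * ‖(y : ℤ → ℂ) (k-1)‖) := by ring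
          _ ≤ δ * ((‖(y : ℤ → ℂ) k‖ ^ 2 + ‖(y : ℤ → ℂ) (k-1)‖ ^ 2) / 2) := by gcongr
    _ = δ / 2 * ((∑ k ∈ S, ‖(y : ℤ → ℂ) k‖ ^ 2) + ∑ k ∈ S, ‖(y : ℤ → ℂ) (k-1)‖ ^ 2) := by
        rw [← Finset.sum_add_distrib, Finset.mul_sum]
        exact Finset.sum_congr rfl fun k _ => by ring
    _ ≤ δ / 2 * (1 + 1) := by
        have : (0:ℝ) ≤ δ / 2 := by linarith
        nlinarith
    _ = δ := by ring

/-- `⋃_{d ∈ X_b} closure (W(A_d)) = closure (W(A_b))`, where `X_b` is the closure of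
the shift orbit of `b` and `b` has entries in the finite alphabet `𝒜 ⊆ ℂ`.
(The family `A` assigns to each `d ∈ X_b` its tridiagonal operator `A_d`;
note `b ∈ X_b`.) -/
theorem stmt13 (𝒜 : Finset ℂ) (b : ℤ → ℂ) (hb : ∀ i, b i ∈ 𝒜)
    (A : (ℤ → ℂ) → Hseq →L[ℂ] Hseq)
    (hA : ∀ d ∈ closure (shiftOrbit b), IsTridiag d (A d)) :
    ⋃ d ∈ closure (shiftOrbit b), closure (numRange (A d)) = closure (numRange (A b)) := by
  have hbmem : b ∈ closure (shiftOrbit b) :=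
    subset_closure ⟨0, funext fun i => by simp⟩
  apply Set.Subset.antisymm
  · refine Set.iUnion₂_subset fun d hd => ?_
    refine closure_minimal ?_ isClosed_closure
    rintro z ⟨x, hx, rfl⟩
    rw [Metric.mem_closure_iff]
    intro ε hε
    obtain ⟨y, S, hy1, hy2, hy3⟩ := trunc_approx d (A d) x hx (ε/2) (by positivity)
    set W : Finset ℤ := S.image (· - 1) with hW
    have hUopen : IsOpen ((W : Set ℤ).pi (fun j => Metric.ball (d j) (ε/4))) :=
      isOpen_set_pi W.finite_toSet (fun i _ => Metric.isOpen_ball)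
    have hdU : d ∈ (W : Set ℤ).pi (fun j => Metric.ball (d j) (ε/4)) :=
      fun j _ => Metric.mem_ball_self (by positivity)
    obtain ⟨c, hcU, n, hceq⟩ := mem_closure_iff_nhds.1 hd _ (hUopen.mem_nhds hdU)
    obtain ⟨y', hn', hco'⟩ := shift_exists y n S hy2
    have hy'1 : ‖y'‖ = 1 := hn'.trans hy1
    refine ⟨inner (𝕜 := ℂ) y' (A b y'), ⟨y', hy'1, rfl⟩, ?_⟩
    have hfd := inner_formula d (A d) (hA d hd) y S hy2
    have hfb : (inner (𝕜 := ℂ) y' (A b y') : ℂ) = ∑ j ∈ S.image (· + n),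
        conj ((y' : ℤ → ℂ) j) *
          ((y' : ℤ → ℂ) (j+1) + b (j-1) * (y' : ℤ → ℂ) (j-1)) := by
      refine inner_formula b (A b) (hA b hbmem) y' _ (fun j hj => ?_)
      rw [hco']
      apply hy2
      intro hmem
      exact hj (Finset.mem_image.2 ⟨j - n, hmem, by ring⟩)
    have hfb2 : (inner (𝕜 := ℂ) y' (A b y') : ℂ) = ∑ k ∈ S,
        conj ((y : ℤ → ℂ) k) *
          ((y : ℤ → ℂ) (k+1) + b (k - 1 + n) * (y : ℤ → ℂ) (k-1)) := by
      have him : ∑ j ∈ S.image (· + n), (fun j => conj ((y' : ℤ → ℂ) j) *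
            ((y' : ℤ → ℂ) (j+1) + b (j-1) * (y' : ℤ → ℂ) (j-1))) j
          = ∑ k ∈ S, (fun j => conj ((y' : ℤ → ℂ) j) *
            ((y' : ℤ → ℂ) (j+1) + b (j-1) * (y' : ℤ → ℂ) (j-1))) (k + n) :=
        Finset.sum_image (fun a _ b _ h => by omega)
      simp only [] at him
      rw [hfb, him]
      refine Finset.sum_congr rfl fun k hk => ?_
      rw [hco', hco', hco']
      have e1 : k + n - n = k := by ring
      have e2 : k + n + 1 - n = k + 1 := by ring
      have e3 : k + n - 1 - n = k - 1 := by ring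
      have e4 : k + n - 1 = k - 1 + n := by ring
      rw [e1, e2, e3, e4]
    have hclose : ∀ k ∈ S, ‖d (k-1) - b (k-1+n)‖ ≤ ε/4 := by
      intro k hk
      have hkW : k - 1 ∈ W := Finset.mem_image.2 ⟨k, hk, rfl⟩
      have h5 := hcU (k-1) hkW
      rw [hceq] at h5
      rw [Metric.mem_ball] at h5
      calc ‖d (k-1) - b (k-1+n)‖ = dist (d (k-1)) (b (k-1+n)) := (dist_eq_norm _ _).symm
        _ = dist (b (k-1+n)) (d (k-1)) := dist_comm _ _
        _ ≤ ε/4 := h5.le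
    have hkey : dist (inner (𝕜 := ℂ) y ((A d) y) : ℂ) (inner (𝕜 := ℂ) y' ((A b) y') : ℂ)
        ≤ ε/4 := by
      rw [hfd, hfb2, dist_eq_norm]
      exact error_bound y hy1 S (fun k => d (k-1)) (fun k => b (k-1+n)) (ε/4)
        (by positivity) hclose
    calc dist (inner (𝕜 := ℂ) x ((A d) x) : ℂ) (inner (𝕜 := ℂ) y' ((A b) y') : ℂ)
        ≤ dist (inner (𝕜 := ℂ) x ((A d) x) : ℂ) (inner (𝕜 := ℂ) y ((A d) y) : ℂ)
          + dist (inner (𝕜 := ℂ) y ((A d) y) : ℂ) (inner (𝕜 := ℂ) y' ((A b) y') : ℂ) :=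
          dist_triangle _ _ _
      _ < ε/2 + ε/4 := add_lt_add_of_lt_of_le (by rw [dist_comm]; exact hy3) hkey
      _ < ε := by linarith
  · exact Set.subset_iUnion₂ (s := fun d _ => closure (numRange (A d))) b hbmem
end
end
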